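/- arXiv:1708.04446 — 6 statements merged into one kernel-verified Lean document; each statement's English description precedes it below -/
import Mathlib

section
/- Let φ ∈ 𝓜 and ε, δ > 0. Define ψ(t) := t^{ε/(ε+δ)} φ(t^{1/(ε+δ)}) for t ≥ 1 and ψ(t) := φ(1) for 0 < t < 1. Then ψ is pseudoconcave in a neighborhood of +∞; that is, there exist b > 1 and a concave function ψ₁ : (b,∞) → (0,∞) such that both ψ/ψ₁ and ψ₁/ψ are bounded on (b,∞). -/
open Filter MeasureTheory
open scoped ENNReal

/-- The class `𝓜`. -/
def MClass (φ : ℝ → ℝ) : Prop :=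
  Measurable φ ∧ (∀ t, 1 ≤ t → 0 < φ t) ∧
  (∀ b : ℝ, 1 < b → ∃ C > 0, ∀ t ∈ Set.Icc (1:ℝ) b, φ t ≤ C ∧ C⁻¹ ≤ φ t) ∧
  (∀ l : ℝ, 0 < l → Tendsto (fun t => φ (l * t) / φ t) atTop (nhds 1))

set_option maxHeartbeats 1000000 in
lemma uct_bound (h : ℝ → ℝ) (hm : Measurable h)
    (hlim : ∀ u : ℝ, Tendsto (fun s => h (s + u) - h s) atTop (nhds 0)) :
    ∃ b₀ : ℝ, ∀ s, b₀ ≤ s → ∀ u ∈ Set.Icc (0:ℝ) 1, |h (s + u) - h s| ≤ 2 := by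
  by_contra hcon
  push_neg at hcon
  choose S hS U hU hbad using fun n : ℕ => hcon n
  have hStop : Tendsto S atTop atTop :=
    tendsto_atTop_mono hS tendsto_natCast_atTop_atTop
  have hTtop : Tendsto (fun n => S n + U n) atTop atTop :=
    tendsto_atTop_mono (fun n => by have := (hU n).1; linarith [hS n]) hStop
  set A : ℕ → Set ℝ := fun n =>
    Set.Icc 0 2 ∩ ⋂ m ∈ Set.Ici n, {x | |h (S m + x) - h (S m)| < 1} with hA
  set Cs : ℕ → Set ℝ := fun n =>
    Set.Icc 0 1 ∩ ⋂ m ∈ Set.Ici n, {x | |h (S m + U m + x) - h (S m + U m)| < 1} with hCs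
  have measval : ∀ (a : ℝ), Measurable fun x : ℝ => |h (a + x) - h a| := fun a =>
    ((hm.comp (measurable_const.add measurable_id)).sub measurable_const).abs
  have measA : ∀ n, MeasurableSet (A n) := fun n =>
    measurableSet_Icc.inter (MeasurableSet.biInter (Set.to_countable _) fun m _ =>
      measurableSet_lt (measval (S m)) measurable_const)
  have measC : ∀ n, MeasurableSet (Cs n) := fun n =>
    measurableSet_Icc.inter (MeasurableSet.biInter (Set.to_countable _) fun m _ =>
      measurableSet_lt (measval (S m + U m)) measurable_const)
  have monoA : Monotone A := by
    intro n n' hnn' x hx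
    obtain ⟨hx1, hx2⟩ := hx
    refine ⟨hx1, ?_⟩
    rw [Set.mem_iInter₂] at hx2 ⊢
    exact fun m hm' => hx2 m (le_trans hnn' hm')
  have monoC : Monotone Cs := by
    intro n n' hnn' x hx
    obtain ⟨hx1, hx2⟩ := hx
    refine ⟨hx1, ?_⟩
    rw [Set.mem_iInter₂] at hx2 ⊢
    exact fun m hm' => hx2 m (le_trans hnn' hm')
  have hAu : ⋃ n, A n = Set.Icc (0:ℝ) 2 := by
    apply subset_antisymm (Set.iUnion_subset fun n => Set.inter_subset_left)
    intro x hx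
    have h1 : Tendsto (fun m => |h (S m + x) - h (S m)|) atTop (nhds 0) := by
      have := ((hlim x).comp hStop).abs
      simpa using this
    obtain ⟨n, hn⟩ := (h1.eventually_lt_const one_pos).exists_forall_of_atTop
    refine Set.mem_iUnion.2 ⟨n, hx, Set.mem_iInter₂.2 fun m hm' => hn m hm'⟩
  have hCu : ⋃ n, Cs n = Set.Icc (0:ℝ) 1 := by
    apply subset_antisymm (Set.iUnion_subset fun n => Set.inter_subset_left)
    intro x hx
    have h1 : Tendsto (fun m => |h (S m + U m + x) - h (S m + U m)|) atTop (nhds 0) := by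
      have := ((hlim x).comp hTtop).abs
      simpa using this
    obtain ⟨n, hn⟩ := (h1.eventually_lt_const one_pos).exists_forall_of_atTop
    refine Set.mem_iUnion.2 ⟨n, hx, Set.mem_iInter₂.2 fun m hm' => hn m hm'⟩
  have hvolA : Tendsto (fun n => volume (A n)) atTop (nhds 2) := by
    have := tendsto_measure_iUnion_atTop (μ := volume) monoA
    rw [hAu] at this
    simpa [Real.volume_Icc, Function.comp_def] using this
  have hvolC : Tendsto (fun n => volume (Cs n)) atTop (nhds 1) := by
    have := tendsto_measure_iUnion_atTop (μ := volume) monoC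
    rw [hCu] at this
    simpa [Real.volume_Icc, Function.comp_def] using this
  have e74 : ENNReal.ofReal (7/4) < 2 := by
    rw [show (2:ℝ≥0∞) = ENNReal.ofReal 2 by simp, ENNReal.ofReal_lt_ofReal_iff] <;> norm_num
  have e34 : ENNReal.ofReal (3/4) < 1 := by
    rw [show (1:ℝ≥0∞) = ENNReal.ofReal 1 by simp, ENNReal.ofReal_lt_ofReal_iff] <;> norm_num
  have hevA : ∀ᶠ n in atTop, ENNReal.ofReal (7/4) < volume (A n) :=
    hvolA.eventually_const_lt e74
  have hevC : ∀ᶠ n in atTop, ENNReal.ofReal (3/4) < volume (Cs n) :=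
    hvolC.eventually_const_lt e34
  obtain ⟨n, hnA, hnC⟩ := (hevA.and hevC).exists
  set B : Set ℝ := (fun x => -U n + x) ⁻¹' Cs n with hB
  have hvolB : volume B = volume (Cs n) := measure_preimage_add volume _ _
  have hBsub : B ⊆ Set.Icc 0 2 := by
    intro x hx
    have : -U n + x ∈ Set.Icc (0:ℝ) 1 := hx.1
    have h1 := (hU n).1; have h2 := (hU n).2
    exact ⟨by linarith [this.1], by linarith [this.2]⟩
  have hne : (A n ∩ B).Nonempty := by
    by_contra hemp
    rw [Set.not_nonempty_iff_eq_empty] at hemp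
    have hdisj : Disjoint (A n) B := Set.disjoint_iff_inter_eq_empty.2 hemp
    have hun : volume (A n ∪ B) = volume (A n) + volume B :=
      measure_union hdisj ((measC n).preimage (measurable_const.add measurable_id))
    have hle : volume (A n ∪ B) ≤ 2 := by
      have : A n ∪ B ⊆ Set.Icc (0:ℝ) 2 := Set.union_subset Set.inter_subset_left hBsub
      calc volume (A n ∪ B) ≤ volume (Set.Icc (0:ℝ) 2) := measure_mono this
        _ = 2 := by norm_num [Real.volume_Icc]
    have hgt : ENNReal.ofReal (7/4) + ENNReal.ofReal (3/4) < volume (A n) + volume B := by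
      rw [hvolB]; exact ENNReal.add_lt_add hnA hnC
    rw [← hun] at hgt
    rw [← ENNReal.ofReal_add (by norm_num) (by norm_num)] at hgt
    have h52 : (2:ℝ≥0∞) < ENNReal.ofReal (7/4 + 3/4) := by
      rw [show (2:ℝ≥0∞) = ENNReal.ofReal 2 by simp, ENNReal.ofReal_lt_ofReal_iff] <;> norm_num
    exact absurd (lt_trans h52 (lt_of_lt_of_le hgt hle)) (lt_irrefl 2)
  obtain ⟨x, hxA, hxB⟩ := hne
  have h1 : |h (S n + x) - h (S n)| < 1 := Set.mem_iInter₂.1 hxA.2 n Set.self_mem_Ici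
  have h2 : |h (S n + U n + (-U n + x)) - h (S n + U n)| < 1 :=
    Set.mem_iInter₂.1 hxB.2 n Set.self_mem_Ici
  have heq : S n + U n + (-U n + x) = S n + x := by ring
  rw [heq] at h2
  have := hbad n
  have htri : |h (S n + U n) - h (S n)| ≤
      |h (S n + U n) - h (S n + x)| + |h (S n + x) - h (S n)| := abs_sub_le _ _ _
  rw [abs_sub_comm (h (S n + U n)) (h (S n + x))] at htri
  linarith

set_option maxHeartbeats 1000000 in
/-- `ψ(t) = t^{ε/(ε+δ)} φ(t^{1/(ε+δ)})` for `t ≥ 1` and `ψ(t) = φ(1)` for `0 < t < 1`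
is pseudoconcave in a neighborhood of `+∞`: it is equivalent there to a concave
positive function. -/
theorem interpolation_parameter_pseudoconcave (φ : ℝ → ℝ) (hφ : MClass φ)
    (ε δ : ℝ) (hε : 0 < ε) (hδ : 0 < δ)
    (ψ : ℝ → ℝ)
    (hψ₁ : ∀ t : ℝ, 1 ≤ t → ψ t = t ^ (ε / (ε + δ)) * φ (t ^ (1 / (ε + δ))))
    (hψ₂ : ∀ t : ℝ, 0 < t → t < 1 → ψ t = φ 1) :
    ∃ b : ℝ, 1 < b ∧ ∃ ψ₁ : ℝ → ℝ,
      ConcaveOn ℝ (Set.Ioi b) ψ₁ ∧ (∀ t ∈ Set.Ioi b, 0 < ψ₁ t) ∧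
      ∃ C : ℝ, 0 < C ∧ ∀ t ∈ Set.Ioi b, ψ t ≤ C * ψ₁ t ∧ ψ₁ t ≤ C * ψ t := by
  classical
  obtain ⟨hφm, hφpos, -, hφlim⟩ := hφ
  set γ : ℝ := 1 / (ε + δ) with hγdef
  set α : ℝ := ε / (ε + δ) with hαdef
  have hεδ : 0 < ε + δ := by linarith
  have hγ : 0 < γ := by rw [hγdef]; positivity
  have hα0 : 0 < α := by rw [hαdef]; positivity
  have hα1 : α < 1 := by rw [hαdef, div_lt_one hεδ]; linarith
  obtain ⟨L, hLdef⟩ : ∃ F : ℝ → ℝ, F = fun t => φ (max t 1 ^ γ) := ⟨_, rfl⟩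
  have hL1 : ∀ t : ℝ, 1 ≤ t → L t = φ (t ^ γ) := by
    intro t ht; rw [hLdef]; simp [max_eq_left ht]
  have hLpos : ∀ t, 0 < L t := by
    intro t
    rw [hLdef]
    exact hφpos _ (Real.one_le_rpow (le_max_right t 1) hγ.le)
  have hLm : Measurable L := by
    rw [hLdef]
    exact hφm.comp ((Real.continuous_rpow_const hγ.le).measurable.comp
      (measurable_id.max measurable_const))
  -- slow variation of L
  have hLratio : ∀ l : ℝ, 0 < l → Tendsto (fun t => L (l * t) / L t) atTop (nhds 1) := by
    intro l hl
    have h1 : Tendsto (fun t : ℝ => φ (l ^ γ * t ^ γ) / φ (t ^ γ)) atTop (nhds 1) :=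
      (hφlim (l ^ γ) (Real.rpow_pos_of_pos hl γ)).comp (tendsto_rpow_atTop hγ)
    apply h1.congr'
    filter_upwards [eventually_ge_atTop (max 1 l⁻¹)] with t ht
    have ht1 : (1:ℝ) ≤ t := le_trans (le_max_left _ _) ht
    have hti : l⁻¹ ≤ t := le_trans (le_max_right _ _) ht
    have hlt : (1:ℝ) ≤ l * t := by
      calc (1:ℝ) = l * l⁻¹ := by field_simp
        _ ≤ l * t := by nlinarith
    rw [hL1 t ht1, hL1 (l*t) hlt, Real.mul_rpow hl.le (by linarith)]
  -- the log-scale function and its limits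
  have hhm : Measurable (fun s => Real.log (L (Real.exp s))) :=
    Real.measurable_log.comp (hLm.comp Real.measurable_exp)
  have hhlim : ∀ u : ℝ, Tendsto
      (fun s => Real.log (L (Real.exp (s + u))) - Real.log (L (Real.exp s)))
      atTop (nhds 0) := by
    intro u
    have h1 : Tendsto (fun t : ℝ => L (Real.exp u * t) / L t) atTop (nhds 1) :=
      hLratio _ (Real.exp_pos u)
    have h2 := (Real.continuousAt_log one_ne_zero).tendsto.comp
      (h1.comp Real.tendsto_exp_atTop)
    rw [Real.log_one] at h2
    apply h2.congr
    intro s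
    simp only [Function.comp_apply]
    rw [Real.log_div (hLpos _).ne' (hLpos _).ne', ← Real.exp_add, add_comm u s]
  obtain ⟨b₀, hb₀⟩ := uct_bound _ hhm hhlim
  -- the two-sided ratio bound
  have hUB : ∀ x t : ℝ, Real.exp b₀ ≤ x → x ≤ t → t ≤ 2 * x →
      L t ≤ Real.exp 2 * L x ∧ L x ≤ Real.exp 2 * L t := by
    intro x t hx hxt ht2
    have hx0 : 0 < x := lt_of_lt_of_le (Real.exp_pos b₀) hx
    have ht0 : 0 < t := lt_of_lt_of_le hx0 hxt
    have hs : b₀ ≤ Real.log x := by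
      rw [← Real.log_exp b₀]; exact Real.log_le_log (Real.exp_pos b₀) hx
    have hu0 : 0 ≤ Real.log t - Real.log x := by
      have := Real.log_le_log hx0 hxt; linarith
    have hu1 : Real.log t - Real.log x ≤ 1 := by
      have h1 : Real.log t ≤ Real.log (2*x) := Real.log_le_log ht0 ht2
      have h2 : Real.log (2*x) = Real.log 2 + Real.log x :=
        Real.log_mul two_ne_zero hx0.ne'
      have h3 : Real.log 2 ≤ 1 := by
        have := Real.log_le_sub_one_of_pos two_pos; linarith
      linarith
    have hres := hb₀ (Real.log x) hs (Real.log t - Real.log x) ⟨hu0, hu1⟩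
    rw [show Real.log x + (Real.log t - Real.log x) = Real.log t by ring,
      Real.exp_log ht0, Real.exp_log hx0, abs_le] at hres
    constructor
    · have h1 : Real.log (L t) ≤ 2 + Real.log (L x) := by linarith [hres.2]
      have h2 := Real.exp_le_exp.2 h1
      rwa [Real.exp_log (hLpos t), Real.exp_add, Real.exp_log (hLpos x)] at h2
    · have h1 : Real.log (L x) ≤ 2 + Real.log (L t) := by linarith [hres.1]
      have h2 := Real.exp_le_exp.2 h1
      rwa [Real.exp_log (hLpos x), Real.exp_add, Real.exp_log (hLpos t)] at h2
  -- the node ratio function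
  obtain ⟨G, hGdef⟩ : ∃ F : ℝ → ℝ, F = fun x => 2 ^ α * (L (2*x) / L x) := ⟨_, rfl⟩
  have hGlim : Tendsto G atTop (nhds ((2:ℝ) ^ α)) := by
    have h1 := (hLratio 2 two_pos).const_mul ((2:ℝ) ^ α)
    simpa [hGdef] using h1
  have h2α1 : (1:ℝ) < 2 ^ α :=
    (Real.one_lt_rpow_iff_of_pos two_pos).2 (Or.inl ⟨one_lt_two, hα0⟩)
  have h2α2 : (2:ℝ) ^ α < 2 := by
    nth_rewrite 2 [show (2:ℝ) = 2 ^ (1:ℝ) by rw [Real.rpow_one]]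
    exact Real.rpow_lt_rpow_of_exponent_lt one_lt_two hα1
  have hG2lim : Tendsto (fun x => G (2*x)) atTop (nhds ((2:ℝ) ^ α)) :=
    hGlim.comp (tendsto_id.const_mul_atTop two_pos)
  have hkey : Tendsto (fun x => G (2*x) * G x + 2 - 3 * G x) atTop
      (nhds ((2:ℝ)^α * 2^α + 2 - 3 * 2^α)) :=
    ((hG2lim.mul hGlim).add tendsto_const_nhds).sub (hGlim.const_mul 3)
  have hneg : (2:ℝ)^α * 2^α + 2 - 3 * 2^α < 0 := by nlinarith
  have hev : ∀ᶠ x : ℝ in atTop, 1 < G x ∧ G (2*x) * G x + 2 - 3 * G x < 0 :=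
    (hGlim.eventually_const_lt h2α1).and (hkey.eventually_lt_const hneg)
  rw [eventually_atTop] at hev
  obtain ⟨c₀, hc₀⟩ := hev
  set c : ℝ := max c₀ (max (Real.exp b₀) 2) with hcdef
  have hc2 : (2:ℝ) ≤ c := le_trans (le_max_right _ _) (le_max_right _ _)
  have hc1 : (1:ℝ) < c := lt_of_lt_of_le one_lt_two hc2
  have hcexp : Real.exp b₀ ≤ c := le_trans (le_max_left _ _) (le_max_right _ _)
  have hcc₀ : c₀ ≤ c := le_max_left _ _
  -- nodes
  obtain ⟨X, hXdef⟩ : ∃ F : ℕ → ℝ, F = fun n => c * 2 ^ n := ⟨_, rfl⟩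
  have hX0 : ∀ n, 0 < X n := by
    intro n
    rw [hXdef]
    have : (0:ℝ) < c := by linarith
    positivity
  have hXc : ∀ n, c ≤ X n := by
    intro n
    have h1 : (1:ℝ) ≤ 2 ^ n := one_le_pow₀ one_le_two
    rw [hXdef]
    calc c = c * 1 := (mul_one c).symm
      _ ≤ c * 2 ^ n := by nlinarith [h1, hc2]
  have hXsucc : ∀ n, X (n+1) = 2 * X n := by
    intro n; simp only [hXdef, pow_succ]; ring
  have hXmono : Monotone X := fun n m h => by
    have h1 : (2:ℝ) ^ n ≤ 2 ^ m := pow_le_pow_right₀ one_le_two h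
    have : (0:ℝ) < c := by linarith
    simp only [hXdef]; nlinarith
  obtain ⟨Y, hYdef⟩ : ∃ F : ℕ → ℝ, F = fun n => X n ^ α * L (X n) := ⟨_, rfl⟩
  have hYpos : ∀ n, 0 < Y n := fun n => by
    have := hLpos (X n); have := hX0 n
    simp only [hYdef]; positivity
  have hYsucc : ∀ n, Y (n+1) = G (X n) * Y n := by
    intro n
    simp only [hYdef, hGdef, hXsucc n]
    rw [Real.mul_rpow (by norm_num) (hX0 n).le]
    field_simp [(hLpos (X n)).ne']
  have hGX1 : ∀ n, 1 < G (X n) := fun n => (hc₀ _ (le_trans hcc₀ (hXc n))).1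
  have hGXsl : ∀ n, G (X (n+1)) * G (X n) + 2 - 3 * G (X n) < 0 := by
    intro n
    have := (hc₀ _ (le_trans hcc₀ (hXc n))).2
    rwa [← hXsucc n] at this
  have hGub : ∀ n, G (X n) ≤ 2 * Real.exp 2 := by
    intro n
    have h1 := (hUB (X n) (2 * X n) (le_trans hcexp (hXc n)) (by nlinarith [hX0 n]) le_rfl).1
    have h2 : L (2 * X n) / L (X n) ≤ Real.exp 2 :=
      (div_le_iff₀ (hLpos (X n))).2 (by nlinarith [h1])
    have h3 : (0:ℝ) < L (2 * X n) / L (X n) := by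
      have := hLpos (2 * X n); have := hLpos (X n); positivity
    calc G (X n) = 2 ^ α * (L (2 * X n) / L (X n)) := by rw [hGdef]
      _ ≤ 2 * Real.exp 2 := by nlinarith [h2α2, h2α1]
  -- slopes
  obtain ⟨Sl, hSldef⟩ : ∃ F : ℕ → ℝ, F = fun n => (Y (n+1) - Y n) / X n := ⟨_, rfl⟩
  have hSl_mul : ∀ n, Sl n * X n = Y (n+1) - Y n := by
    intro n
    rw [hSldef]
    exact div_mul_cancel₀ _ (hX0 n).ne'
  have hSlpos : ∀ n, 0 < Sl n := by
    intro n
    have h1 : 0 < Y (n+1) - Y n := by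
      rw [hYsucc n]; nlinarith [hGX1 n, hYpos n]
    rw [hSldef]
    exact div_pos h1 (hX0 n)
  have hSlanti : ∀ n, Sl (n+1) < Sl n := by
    intro n
    have hD : Y (n+2) - Y (n+1) < 2 * (Y (n+1) - Y n) := by
      have e1 : Y (n+1) = G (X n) * Y n := hYsucc n
      have e2 : Y (n+2) = G (X (n+1)) * (G (X n) * Y n) := by
        rw [show n+2 = (n+1)+1 by rfl, hYsucc (n+1), hYsucc n]
      rw [e1, e2]
      nlinarith [hGXsl n, hYpos n, hGX1 n]
    simp only [hSldef]
    rw [div_lt_div_iff₀ (hX0 (n+1)) (hX0 n), hXsucc n]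
    nlinarith [hX0 n]
  have hSlAnti : StrictAnti Sl := strictAnti_nat_of_succ_lt hSlanti
  -- chords
  obtain ⟨Lf, hLfdef⟩ : ∃ F : ℕ → ℝ → ℝ, F = fun n t => Y n + Sl n * (t - X n) := ⟨_, rfl⟩
  have hstep : ∀ n (t : ℝ), Lf (n+1) t - Lf n t = (Sl (n+1) - Sl n) * (t - X (n+1)) := by
    intro n t
    have h2 := hSl_mul n
    have hx := hXsucc n
    simp only [hLfdef]
    linear_combination -h2 - Sl n * hx
  have hfind : ∀ t : ℝ, c < t → ∃ m, X m ≤ t ∧ t ≤ X (m+1) := by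
    intro t ht
    have hc0 : (0:ℝ) < c := by linarith
    have hPex : ∃ n : ℕ, t < c * 2 ^ (n+1) := by
      obtain ⟨n, hn⟩ := pow_unbounded_of_one_lt (t / c) (show (1:ℝ) < 2 by norm_num)
      refine ⟨n, ?_⟩
      rw [div_lt_iff₀ hc0] at hn
      have h2 : (2:ℝ) ^ n ≤ 2 ^ (n+1) :=
        pow_le_pow_right₀ (show (1:ℝ) ≤ 2 by norm_num) (Nat.le_succ n)
      calc t < 2 ^ n * c := hn
        _ = c * 2 ^ n := by ring
        _ ≤ c * 2 ^ (n+1) := mul_le_mul_of_nonneg_left h2 hc0.le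
    have key : ∀ n : ℕ, t < c * 2 ^ (n+1) → ∃ m, X m ≤ t ∧ t ≤ X (m+1) := by
      intro n
      induction n with
      | zero =>
        intro h
        exact ⟨0, by simpa [hXdef] using ht.le, by simpa [hXdef] using h.le⟩
      | succ k ih =>
        intro h
        rcases le_or_gt (X (k+1)) t with h1 | h1
        · exact ⟨k+1, h1, by simpa [hXdef] using h.le⟩
        · exact ih (by simpa [hXdef] using h1)
    obtain ⟨n, hn⟩ := hPex
    exact key n hn
  have hchain : ∀ m (t : ℝ), X m ≤ t → t ≤ X (m+1) → ∀ n, Lf m t ≤ Lf n t := by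
    intro m t h1 h2
    have up : ∀ k, Lf m t ≤ Lf (m + k) t := by
      intro k
      induction k with
      | zero => exact le_rfl
      | succ k ih =>
        refine le_trans ih (show Lf (m+k) t ≤ Lf (m+k+1) t from ?_)
        have hd := hstep (m+k) t
        have hs : Sl (m+k+1) - Sl (m+k) ≤ 0 := by linarith [hSlanti (m+k)]
        have hx : t - X (m+k+1) ≤ 0 := by
          have := hXmono (show m+1 ≤ m+k+1 by omega)
          linarith
        have := mul_nonneg (neg_nonneg.2 hs) (neg_nonneg.2 hx)
        rw [neg_mul_neg] at this
        linarith
    have down : ∀ k, k ≤ m → Lf m t ≤ Lf (m - k) t := by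
      intro k
      induction k with
      | zero => intro _; exact le_rfl
      | succ k ih =>
        intro hk
        refine le_trans (ih (by omega)) (show Lf (m-k) t ≤ Lf (m-(k+1)) t from ?_)
        have he : m - k = (m - (k+1)) + 1 := by omega
        have hd := hstep (m - (k+1)) t
        rw [← he] at hd
        have hs : Sl (m-k) - Sl (m-(k+1)) ≤ 0 := by
          rw [he]; linarith [hSlanti (m-(k+1))]
        have hx : 0 ≤ t - X (m-k) := by
          have := hXmono (show m-k ≤ m by omega)
          linarith
        have := mul_nonpos_of_nonpos_of_nonneg hs hx
        linarith
    intro n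
    rcases le_or_gt n m with h | h
    · have := down (m - n) (by omega)
      rwa [Nat.sub_sub_self h] at this
    · have := up (n - m)
      rwa [Nat.add_sub_cancel' h.le] at this
  obtain ⟨ψ₁, hψ₁def⟩ : ∃ F : ℝ → ℝ, F = fun t => ⨅ n, Lf n t := ⟨_, rfl⟩
  have hbddB : ∀ t : ℝ, c < t → BddBelow (Set.range fun n => Lf n t) := by
    intro t ht
    obtain ⟨m, hm1, hm2⟩ := hfind t ht
    exact ⟨Lf m t, by rintro v ⟨n, rfl⟩; exact hchain m t hm1 hm2 n⟩
  have hpsi1eq : ∀ t : ℝ, c < t → ∀ m, X m ≤ t → t ≤ X (m+1) → ψ₁ t = Lf m t := by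
    intro t ht m h1 h2
    simp only [hψ₁def]
    exact le_antisymm (ciInf_le (hbddB t ht) m) (le_ciInf fun n => hchain m t h1 h2 n)
  refine ⟨c, hc1, ψ₁, ?_, ?_, ?_⟩
  · -- concavity
    refine ⟨convex_Ioi c, ?_⟩
    intro x hx y hy a b ha hb hab
    have hz : a • x + b • y ∈ Set.Ioi c := (convex_Ioi c) hx hy ha hb hab
    obtain ⟨m, hm1, hm2⟩ := hfind _ hz
    have e1 : ψ₁ (a • x + b • y) = Lf m (a • x + b • y) := hpsi1eq _ hz m hm1 hm2
    have e2 : ψ₁ x ≤ Lf m x := by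
      simp only [hψ₁def]; exact ciInf_le (hbddB x hx) m
    have e3 : ψ₁ y ≤ Lf m y := by
      simp only [hψ₁def]; exact ciInf_le (hbddB y hy) m
    have e4 : Lf m (a • x + b • y) = a * Lf m x + b * Lf m y := by
      simp only [hLfdef, smul_eq_mul]
      linear_combination (Sl m * X m - Y m) * hab
    calc a • ψ₁ x + b • ψ₁ y ≤ a * Lf m x + b * Lf m y := by
          simp only [smul_eq_mul]
          exact add_le_add (mul_le_mul_of_nonneg_left e2 ha)
            (mul_le_mul_of_nonneg_left e3 hb)
      _ = Lf m (a • x + b • y) := e4.symm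
      _ = ψ₁ (a • x + b • y) := e1.symm
  · -- positivity
    intro t ht
    rw [Set.mem_Ioi] at ht
    obtain ⟨m, hm1, hm2⟩ := hfind t ht
    rw [hpsi1eq t ht m hm1 hm2]
    simp only [hLfdef]
    have h := mul_nonneg (hSlpos m).le (sub_nonneg.2 hm1)
    linarith [hYpos m]
  · -- comparability
    refine ⟨2 * Real.exp 2 * Real.exp 2, by positivity, ?_⟩
    intro t ht
    rw [Set.mem_Ioi] at ht
    obtain ⟨m, hm1, hm2⟩ := hfind t ht
    have ht1 : (1:ℝ) ≤ t := le_of_lt (lt_of_le_of_lt hc1.le ht)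
    have hψeq : ψ t = t ^ α * L t := by
      rw [hψ₁ t ht1, hL1 t ht1]
    have hm2' : t ≤ 2 * X m := by rw [← hXsucc m]; exact hm2
    have hXmexp : Real.exp b₀ ≤ X m := le_trans hcexp (hXc m)
    obtain ⟨hLub, hLlb⟩ := hUB (X m) t hXmexp hm1 hm2'
    have hXm0 := hX0 m
    have ht0 : (0:ℝ) < t := by linarith
    have hta : t ^ α ≤ 2 * X m ^ α := by
      have h1 : t ^ α ≤ (2 * X m) ^ α :=
        Real.rpow_le_rpow ht0.le hm2' hα0.le
      rw [Real.mul_rpow (by norm_num) hXm0.le] at h1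
      have h2 : (0:ℝ) < X m ^ α := Real.rpow_pos_of_pos hXm0 α
      nlinarith [h2α2]
    have hat : X m ^ α ≤ t ^ α := Real.rpow_le_rpow hXm0.le hm1 hα0.le
    have hψ₁eq : ψ₁ t = Lf m t := hpsi1eq t ht m hm1 hm2
    have hψ₁low : Y m ≤ ψ₁ t := by
      rw [hψ₁eq]
      simp only [hLfdef]
      nlinarith [hSlpos m]
    have hψ₁high : ψ₁ t ≤ 2 * Real.exp 2 * Y m := by
      rw [hψ₁eq]
      have h1 : Lf m t ≤ Lf m (X (m+1)) := by
        simp only [hLfdef]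
        nlinarith [hSlpos m]
      have h2 : Lf m (X (m+1)) = Y (m+1) := by
        simp only [hLfdef, hXsucc m]
        have := hSl_mul m
        nlinarith [hSl_mul m]
      have h3 : Y (m+1) ≤ 2 * Real.exp 2 * Y m := by
        rw [hYsucc m]
        nlinarith [hGub m, hYpos m]
      linarith
    have hXmα : (0:ℝ) < X m ^ α := Real.rpow_pos_of_pos hXm0 α
    have htα : (0:ℝ) < t ^ α := Real.rpow_pos_of_pos ht0 α
    have hexp1 : (1:ℝ) ≤ Real.exp 2 := Real.one_le_exp (by norm_num)
    constructor
    · -- ψ t ≤ C * ψ₁ t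
      rw [hψeq]
      have h1 : t ^ α * L t ≤ (2 * X m ^ α) * (Real.exp 2 * L (X m)) := by
        apply mul_le_mul hta hLub (hLpos t).le (by positivity)
      have h2 : (2 * X m ^ α) * (Real.exp 2 * L (X m)) = 2 * Real.exp 2 * Y m := by
        simp only [hYdef]; ring
      have h3 : 2 * Real.exp 2 * Y m ≤ 2 * Real.exp 2 * Real.exp 2 * ψ₁ t := by
        have hp : 0 < ψ₁ t := lt_of_lt_of_le (hYpos m) hψ₁low
        have e2p : (0:ℝ) < Real.exp 2 := Real.exp_pos 2
        nlinarith [mul_le_mul_of_nonneg_left hψ₁low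
          (show (0:ℝ) ≤ 2 * Real.exp 2 by positivity),
          mul_nonneg (sub_nonneg.2 hexp1) hp.le]
      linarith
    · -- ψ₁ t ≤ C * ψ t
      rw [hψeq]
      have h1 : Y m ≤ t ^ α * (Real.exp 2 * L t) := by
        simp only [hYdef]
        apply mul_le_mul hat hLlb (hLpos (X m)).le htα.le
      have h2 : ψ₁ t ≤ 2 * Real.exp 2 * (t ^ α * (Real.exp 2 * L t)) := by
        have := hψ₁high
        nlinarith [Real.exp_pos 2]
      nlinarith [Real.exp_pos 2]
end

section
/- Let X₀, X₁, Y₀, Y₁ be separable complex Hilbert spaces with X₁ ⊂ X₀ and Y₁ ⊂ Y₀ continuously and densely embedded. Let T : X₀ → Y₀ be a bounded linear operator whose restriction to X₁ is a bounded operator T : X₁ → Y₁. Suppose T : X₀ → Y₀ and T : X₁ → Y₁ are both Fredholm, with the same kernel N ⊂ X₁ and the same index. Then the range of T : X₁ → Y₁ equals Y₁ ∩ T(X₀). -/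
open Filter


/-- A closed submodule plus a finite-dimensional submodule is closed. -/
lemma aux_isClosed_sup {E : Type*} [NormedAddCommGroup E] [NormedSpace ℂ E]
    (C F : Submodule ℂ E) (hC : IsClosed (C : Set E)) [FiniteDimensional ℂ F] :
    IsClosed ((C ⊔ F : Submodule ℂ E) : Set E) := by
  haveI : IsClosed (C : Set E) := hC
  have hcont : Continuous (C.mkQ) := continuous_quot_mk
  have h1 : IsClosed ((Submodule.map C.mkQ F : Submodule ℂ (E ⧸ C)) : Set (E ⧸ C)) :=
    Submodule.closed_of_finiteDimensional _
  have h2 : C ⊔ F = Submodule.comap C.mkQ (Submodule.map C.mkQ F) := by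
    rw [Submodule.comap_map_eq, Submodule.ker_mkQ, sup_comm]
  rw [h2]
  exact h1.preimage hcont

/-- A continuous linear map between Hilbert-type Banach spaces with finite-dimensional
kernel and finite-dimensional cokernel has closed range. -/
lemma aux_closed_range {X₀ Y₀ : Type*}
    [NormedAddCommGroup X₀] [InnerProductSpace ℂ X₀] [CompleteSpace X₀]
    [NormedAddCommGroup Y₀] [InnerProductSpace ℂ Y₀] [CompleteSpace Y₀]
    (T : X₀ →L[ℂ] Y₀)
    (hker₀ : FiniteDimensional ℂ (LinearMap.ker (T : X₀ →ₗ[ℂ] Y₀)))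
    (hcoker₀ : FiniteDimensional ℂ (Y₀ ⧸ LinearMap.range (T : X₀ →ₗ[ℂ] Y₀))) :
    IsClosed ((LinearMap.range (T : X₀ →ₗ[ℂ] Y₀) : Submodule ℂ Y₀) : Set Y₀) := by
  set N : Submodule ℂ X₀ := LinearMap.ker (T : X₀ →ₗ[ℂ] Y₀) with hN
  set R₀ : Submodule ℂ Y₀ := LinearMap.range (T : X₀ →ₗ[ℂ] Y₀) with hR₀
  obtain ⟨W, hW⟩ := Submodule.exists_isCompl R₀
  haveI : FiniteDimensional ℂ W :=
    Module.Finite.equiv (Submodule.quotientEquivOfIsCompl R₀ W hW)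
  haveI : CompleteSpace N := FiniteDimensional.complete ℂ N
  have hcomplN : IsCompl N Nᗮ := Submodule.isCompl_orthogonal_of_hasOrthogonalProjection
  haveI : CompleteSpace (↥Nᗮ) := (Submodule.isClosed_orthogonal N).completeSpace_coe
  haveI : CompleteSpace W := FiniteDimensional.complete ℂ W
  set S : (↥Nᗮ × ↥W) →L[ℂ] Y₀ := (T.comp (Submodule.subtypeL Nᗮ)).coprod (Submodule.subtypeL W)
    with hS
  have hSapp : ∀ p : ↥Nᗮ × ↥W, S p = T (p.1 : X₀) + (p.2 : Y₀) := fun p => rfl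
  have hinj : LinearMap.ker (S : (↥Nᗮ × ↥W) →ₗ[ℂ] Y₀) = ⊥ := by
    rw [LinearMap.ker_eq_bot']
    rintro ⟨k, w⟩ hp
    have hp' : T (k : X₀) + (w : Y₀) = 0 := hp
    have hTk : T (k : X₀) ∈ R₀ := ⟨(k : X₀), rfl⟩
    have hw : (w : Y₀) ∈ R₀ := by
      have : (w : Y₀) = -(T (k : X₀)) := eq_neg_of_add_eq_zero_right hp'
      rw [this]; exact R₀.neg_mem hTk
    have hw0 : (w : Y₀) = 0 := by
      have := hW.disjoint.le_bot ⟨hw, w.2⟩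
      simpa using this
    have hk0 : (k : X₀) = 0 := by
      have hTk0 : T (k : X₀) = 0 := by
        have : T (k : X₀) = -(w : Y₀) := eq_neg_of_add_eq_zero_left hp'
        rw [this, hw0, neg_zero]
      have : (k : X₀) ∈ N ⊓ Nᗮ := ⟨hTk0, k.2⟩
      simpa using hcomplN.disjoint.le_bot this
    ext
    · exact hk0
    · exact hw0
  have hsurj : LinearMap.range (S : (↥Nᗮ × ↥W) →ₗ[ℂ] Y₀) = ⊤ := by
    rw [LinearMap.range_eq_top]
    intro y
    have hy : y ∈ R₀ ⊔ W := by rw [hW.sup_eq_top]; trivial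
    obtain ⟨r, hr, w, hwmem, rfl⟩ := Submodule.mem_sup.1 hy
    obtain ⟨x, rfl⟩ := hr
    have hx : x ∈ N ⊔ Nᗮ := by rw [hcomplN.sup_eq_top]; trivial
    obtain ⟨n, hn, k, hk, rfl⟩ := Submodule.mem_sup.1 hx
    refine ⟨(⟨k, hk⟩, ⟨w, hwmem⟩), ?_⟩
    have hTn : T n = 0 := hn
    simp [hSapp, map_add, hTn]
  let e : (↥Nᗮ × ↥W) ≃L[ℂ] Y₀ := ContinuousLinearEquiv.ofBijective S hinj hsurj
  have hset : (R₀ : Set Y₀) = e '' (Prod.snd ⁻¹' ({0} : Set ↥W)) := by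
    ext y
    constructor
    · rintro ⟨x, rfl⟩
      have hx : x ∈ N ⊔ Nᗮ := by rw [hcomplN.sup_eq_top]; trivial
      obtain ⟨n, hn, k, hk, rfl⟩ := Submodule.mem_sup.1 hx
      refine ⟨(⟨k, hk⟩, 0), rfl, ?_⟩
      have hTn : T n = 0 := hn
      show S (⟨k, hk⟩, 0) = T (n + k)
      simp [hSapp, map_add, hTn]
    · rintro ⟨⟨k, w⟩, hw, rfl⟩
      have hw0 : w = 0 := hw
      refine ⟨(k : X₀), ?_⟩
      show T (k : X₀) = S (k, w)
      simp [hSapp, hw0]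
  rw [hset]
  exact (e.toHomeomorph.isClosedMap _ (isClosed_singleton.preimage continuous_snd))

/-- Interpolation-type statement on Fredholm operators: if a bounded operator
`T : X₀ → Y₀` restricts to a bounded operator `T₁ : X₁ → Y₁` (with `X₁ ⊂ X₀`,
`Y₁ ⊂ Y₀` continuously and densely embedded), both operators are Fredholm with the
same kernel (contained in `X₁`) and the same index, then the range of `T₁` equals
`Y₁ ∩ T(X₀)`. -/
theorem fredholm_restriction_range
    (X₀ X₁ Y₀ Y₁ : Type*)
    [NormedAddCommGroup X₀] [InnerProductSpace ℂ X₀] [CompleteSpace X₀]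
    [TopologicalSpace.SeparableSpace X₀]
    [NormedAddCommGroup X₁] [InnerProductSpace ℂ X₁] [CompleteSpace X₁]
    [TopologicalSpace.SeparableSpace X₁]
    [NormedAddCommGroup Y₀] [InnerProductSpace ℂ Y₀] [CompleteSpace Y₀]
    [TopologicalSpace.SeparableSpace Y₀]
    [NormedAddCommGroup Y₁] [InnerProductSpace ℂ Y₁] [CompleteSpace Y₁]
    [TopologicalSpace.SeparableSpace Y₁]
    (i : X₁ →L[ℂ] X₀) (hi : Function.Injective i) (hid : DenseRange i)
    (j : Y₁ →L[ℂ] Y₀) (hj : Function.Injective j) (hjd : DenseRange j)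
    (T : X₀ →L[ℂ] Y₀) (T₁ : X₁ →L[ℂ] Y₁)
    (hcomp : ∀ x : X₁, j (T₁ x) = T (i x))
    -- both operators are Fredholm:
    (hker₀ : FiniteDimensional ℂ (LinearMap.ker (T : X₀ →ₗ[ℂ] Y₀)))
    (hcoker₀ : FiniteDimensional ℂ (Y₀ ⧸ LinearMap.range (T : X₀ →ₗ[ℂ] Y₀)))
    (hker₁ : FiniteDimensional ℂ (LinearMap.ker (T₁ : X₁ →ₗ[ℂ] Y₁)))
    (hcoker₁ : FiniteDimensional ℂ (Y₁ ⧸ LinearMap.range (T₁ : X₁ →ₗ[ℂ] Y₁)))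
    -- the kernels coincide (as subsets of `X₁`):
    (hker_eq : ∀ x : X₀, x ∈ LinearMap.ker (T : X₀ →ₗ[ℂ] Y₀) ↔ ∃ x₁ ∈ LinearMap.ker (T₁ : X₁ →ₗ[ℂ] Y₁), i x₁ = x)
    -- the indices coincide:
    (hindex :
      (Module.finrank ℂ (LinearMap.ker (T : X₀ →ₗ[ℂ] Y₀)) : ℤ) -
          Module.finrank ℂ (Y₀ ⧸ LinearMap.range (T : X₀ →ₗ[ℂ] Y₀)) =
        (Module.finrank ℂ (LinearMap.ker (T₁ : X₁ →ₗ[ℂ] Y₁)) : ℤ) -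
          Module.finrank ℂ (Y₁ ⧸ LinearMap.range (T₁ : X₁ →ₗ[ℂ] Y₁))) :
    ∀ y₁ : Y₁, (∃ x₁ : X₁, T₁ x₁ = y₁) ↔ ∃ x₀ : X₀, T x₀ = j y₁ := by
  set R₀ : Submodule ℂ Y₀ := LinearMap.range (T : X₀ →ₗ[ℂ] Y₀) with hR₀def
  set R₁ : Submodule ℂ Y₁ := LinearMap.range (T₁ : X₁ →ₗ[ℂ] Y₁) with hR₁def
  -- the kernels are isomorphic
  have hkermap : ∀ x ∈ LinearMap.ker (T₁ : X₁ →ₗ[ℂ] Y₁), i x ∈ LinearMap.ker (T : X₀ →ₗ[ℂ] Y₀) := by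
    intro x hx
    exact (hker_eq (i x)).2 ⟨x, hx, rfl⟩
  have ekk : (LinearMap.ker (T₁ : X₁ →ₗ[ℂ] Y₁)) ≃ₗ[ℂ] (LinearMap.ker (T : X₀ →ₗ[ℂ] Y₀)) := by
    refine LinearEquiv.ofBijective ((i : X₁ →ₗ[ℂ] X₀).restrict hkermap) ⟨?_, ?_⟩
    · intro a b hab
      apply Subtype.ext
      apply hi
      exact congrArg Subtype.val hab
    · rintro ⟨x, hx⟩
      obtain ⟨x₁, hx₁, hix₁⟩ := (hker_eq x).1 hx
      exact ⟨⟨x₁, hx₁⟩, Subtype.ext hix₁⟩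
  have hkerrank : Module.finrank ℂ (LinearMap.ker (T : X₀ →ₗ[ℂ] Y₀)) = Module.finrank ℂ (LinearMap.ker (T₁ : X₁ →ₗ[ℂ] Y₁)) :=
    ekk.symm.finrank_eq
  have hdim : Module.finrank ℂ (Y₁ ⧸ R₁) = Module.finrank ℂ (Y₀ ⧸ R₀) := by
    have h := hindex
    rw [hkerrank] at h
    omega
  -- the range R₀ is closed
  have hRclosed : IsClosed (R₀ : Set Y₀) := aux_closed_range T hker₀ hcoker₀
  -- R₀ ⊔ range j = ⊤
  obtain ⟨W, hW⟩ := Submodule.exists_isCompl R₀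
  haveI : FiniteDimensional ℂ W :=
    Module.Finite.equiv (Submodule.quotientEquivOfIsCompl R₀ W hW)
  set V : Submodule ℂ Y₀ := R₀ ⊔ LinearMap.range (j : Y₁ →ₗ[ℂ] Y₀) with hVdef
  have hVclosed : IsClosed (V : Set Y₀) := by
    have hmod : V = R₀ ⊔ (V ⊓ W) := by
      apply le_antisymm
      · intro v hv
        have hv' : v ∈ R₀ ⊔ W := by rw [hW.sup_eq_top]; trivial
        obtain ⟨r, hr, w, hw, rfl⟩ := Submodule.mem_sup.1 hv'
        refine Submodule.add_mem_sup hr (Submodule.mem_inf.2 ⟨?_, hw⟩)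
        have hrV : r ∈ V := Submodule.mem_sup_left hr
        have := V.sub_mem hv hrV
        simpa using this
      · exact sup_le le_sup_left inf_le_left
    rw [hmod]
    exact aux_isClosed_sup _ _ hRclosed
  have hVdense : Dense (V : Set Y₀) := by
    have h1 : Set.range j ⊆ (V : Set Y₀) := by
      rintro _ ⟨w, rfl⟩
      exact Submodule.mem_sup_right ⟨w, rfl⟩
    exact hjd.mono h1
  have hVtop : V = ⊤ := by
    have h : (V : Set Y₀) = Set.univ := by
      rw [← hVclosed.closure_eq, hVdense.closure_eq]
    exact SetLike.ext' (h.trans (by rfl))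
  -- the induced map on cokernels
  have hle : R₁ ≤ R₀.comap (j : Y₁ →ₗ[ℂ] Y₀) := by
    rintro y ⟨x, rfl⟩
    exact ⟨i x, (hcomp x).symm⟩
  set ψ : (Y₁ ⧸ R₁) →ₗ[ℂ] (Y₀ ⧸ R₀) := Submodule.mapQ R₁ R₀ (j : Y₁ →ₗ[ℂ] Y₀) hle with hψdef
  have hψsurj : Function.Surjective ψ := by
    intro z
    obtain ⟨y₀, rfl⟩ := Submodule.Quotient.mk_surjective R₀ z
    have hy : y₀ ∈ R₀ ⊔ LinearMap.range (j : Y₁ →ₗ[ℂ] Y₀) := by rw [← hVdef, hVtop]; trivial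
    obtain ⟨r, hr, _, ⟨w, rfl⟩, rfl⟩ := Submodule.mem_sup.1 hy
    refine ⟨Submodule.Quotient.mk w, ?_⟩
    rw [hψdef, Submodule.mapQ_apply]
    have : Submodule.Quotient.mk (p := R₀) r = 0 := (Submodule.Quotient.mk_eq_zero R₀).2 hr
    rw [Submodule.Quotient.mk_add, this, zero_add]
  have hψinj : Function.Injective ψ :=
    (LinearMap.injective_iff_surjective_of_finrank_eq_finrank hdim).2 hψsurj
  intro y₁
  constructor
  · rintro ⟨x₁, rfl⟩
    exact ⟨i x₁, (hcomp x₁).symm⟩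
  · rintro ⟨x₀, hx₀⟩
    have h0 : ψ (Submodule.Quotient.mk y₁) = 0 := by
      rw [hψdef, Submodule.mapQ_apply]
      exact (Submodule.Quotient.mk_eq_zero R₀).2 ⟨x₀, hx₀⟩
    have h1 : Submodule.Quotient.mk (p := R₁) y₁ = 0 := by
      apply hψinj
      rw [h0, map_zero]
    obtain ⟨x₁, hx₁⟩ := (Submodule.Quotient.mk_eq_zero R₁).1 h1
    exact ⟨x₁, hx₁⟩
end

section
/- (Peetre's lemma setting.) Let E₁, E₂, E₃ be Banach spaces, A : E₁ → E₂ a bounded linear operator with finite-dimensional kernel and closed range, and suppose the embedding E₁ ↪ E₃ is compact. Then there exists c > 0 such that ‖u‖_{E₁} ≤ c(‖Au‖_{E₂} + ‖u‖_{E₃}) for all u ∈ E₁. -/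
open Function

/-- An injective continuous linear map with closed range between Banach spaces is
bounded below. -/
lemma bounded_below_of_injective_closed_range
    {F G : Type*} [NormedAddCommGroup F] [NormedSpace ℂ F] [CompleteSpace F]
    [NormedAddCommGroup G] [NormedSpace ℂ G] [CompleteSpace G]
    (B : F →L[ℂ] G) (hinj : Function.Injective B) (hclo : IsClosed (Set.range B)) :
    ∃ c : ℝ, 0 ≤ c ∧ ∀ w : F, ‖w‖ ≤ c * ‖B w‖ := by
  have hK := (B.equivRange hinj hclo).antilipschitz
  refine ⟨((‖((B.equivRange hinj hclo).symm : LinearMap.range (B : F →ₗ[ℂ] G) →L[ℂ] F)‖₊ : NNReal) : ℝ), NNReal.coe_nonneg _, fun w => ?_⟩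
  have := hK.le_mul_dist w 0
  rw [map_zero, dist_zero_right, dist_zero_right] at this
  exact this

set_option maxHeartbeats 1000000 in
/-- Peetre's lemma: if `A : E₁ → E₂` is a bounded operator with finite-dimensional kernel
and closed range, and `K : E₁ → E₃` is a compact (injective) embedding, then
`‖u‖ ≤ c(‖Au‖ + ‖Ku‖)` for all `u`. -/
theorem peetre_lemma
    (E₁ E₂ E₃ : Type*)
    [NormedAddCommGroup E₁] [NormedSpace ℂ E₁] [CompleteSpace E₁]
    [NormedAddCommGroup E₂] [NormedSpace ℂ E₂] [CompleteSpace E₂]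
    [NormedAddCommGroup E₃] [NormedSpace ℂ E₃] [CompleteSpace E₃]
    (A : E₁ →L[ℂ] E₂)
    (hker : FiniteDimensional ℂ (LinearMap.ker (A : E₁ →ₗ[ℂ] E₂)))
    (hrange : IsClosed (Set.range A))
    (K : E₁ →L[ℂ] E₃) (hKinj : Function.Injective K) (hKcpt : IsCompactOperator K) :
    ∃ c : ℝ, 0 < c ∧ ∀ u : E₁, ‖u‖ ≤ c * (‖A u‖ + ‖K u‖) := by
  classical
  set N := LinearMap.ker (A : E₁ →ₗ[ℂ] E₂) with hN
  obtain ⟨f, hf⟩ := Submodule.ClosedComplemented.of_finiteDimensional N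
  set P : E₁ →L[ℂ] E₁ := N.subtypeL.comp f with hPdef
  have hPmem : ∀ u : E₁, P u ∈ N := fun u => (f u).2
  have hAP : ∀ u : E₁, A (P u) = 0 := fun u => (f u).2
  have hPP : ∀ u : E₁, P (P u) = P u := by
    intro u
    show (↑(f ↑(f u)) : E₁) = ↑(f u)
    rw [hf (f u)]
  set M := LinearMap.ker (P : E₁ →ₗ[ℂ] E₁) with hM
  have hmemM : ∀ u : E₁, u - P u ∈ M := by
    intro u
    simp only [hM, LinearMap.mem_ker, ContinuousLinearMap.coe_coe, map_sub, hPP, sub_self]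
  set B : M →L[ℂ] E₂ := A.comp M.subtypeL with hB
  have hBinj : Function.Injective B := by
    intro w₁ w₂ h
    have h0 : A ((w₁ : E₁) - w₂) = 0 := by
      rw [map_sub, show A (w₁:E₁) = A (w₂:E₁) from h, sub_self]
    have hmem : (w₁ : E₁) - w₂ ∈ N := h0
    have h1 : P ((w₁ : E₁) - w₂) = (w₁ : E₁) - w₂ := by
      show (↑(f ((w₁ : E₁) - w₂)) : E₁) = _
      rw [show f ((w₁ : E₁) - w₂) = ⟨(w₁ : E₁) - w₂, hmem⟩ from hf ⟨_, hmem⟩]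
    have h2 : P ((w₁ : E₁) - w₂) = 0 := by
      rw [map_sub, show P w₁ = 0 from w₁.2, show P w₂ = 0 from w₂.2, sub_zero]
    exact Subtype.ext (by rw [← sub_eq_zero, ← h1, h2])
  have hBrange : Set.range B = Set.range A := by
    ext y
    constructor
    · rintro ⟨w, rfl⟩; exact ⟨w, rfl⟩
    · rintro ⟨u, rfl⟩
      refine ⟨⟨u - P u, hmemM u⟩, ?_⟩
      show A (u - P u) = A u
      rw [map_sub, hAP, sub_zero]
  obtain ⟨c₁, hc₁, hc₁'⟩ := bounded_below_of_injective_closed_range B hBinj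
    (hBrange ▸ hrange)
  set Bk : N →L[ℂ] E₃ := K.comp N.subtypeL with hBk
  have hBkinj : Function.Injective Bk := fun v₁ v₂ h =>
    Subtype.ext (hKinj h)
  have hBkclo : IsClosed (Set.range Bk) := by
    have : Set.range Bk = (LinearMap.range (Bk : N →ₗ[ℂ] E₃) : Set E₃) := by
      ext y; simp [LinearMap.mem_range]
    rw [this]
    exact Submodule.closed_of_finiteDimensional _
  obtain ⟨c₂, hc₂, hc₂'⟩ := bounded_below_of_injective_closed_range Bk hBkinj hBkclo
  refine ⟨c₁ + c₂ * ‖K‖ * c₁ + c₂ + 1, by positivity, fun u => ?_⟩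
  set w : E₁ := u - P u with hw
  have hwbd : ‖w‖ ≤ c₁ * ‖A u‖ := by
    have := hc₁' ⟨w, hmemM u⟩
    simpa [hB, hw, map_sub, hAP, sub_zero] using this
  have hvbd : ‖P u‖ ≤ c₂ * ‖K (P u)‖ := by
    have := hc₂' (f u)
    simpa [hBk, hPdef] using this
  have hKP : ‖K (P u)‖ ≤ ‖K u‖ + ‖K‖ * ‖w‖ := by
    have h1 : K (P u) = K u - K w := by rw [hw, map_sub, sub_sub_cancel]
    rw [h1]
    calc ‖K u - K w‖ ≤ ‖K u‖ + ‖K w‖ := norm_sub_le _ _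
      _ ≤ ‖K u‖ + ‖K‖ * ‖w‖ := by
          gcongr; exact K.le_opNorm w
  have htri : ‖u‖ ≤ ‖P u‖ + ‖w‖ := by
    calc ‖u‖ = ‖P u + w‖ := by rw [hw]; congr 1; abel
      _ ≤ ‖P u‖ + ‖w‖ := norm_add_le _ _
  have hKnn : (0:ℝ) ≤ ‖K‖ := norm_nonneg _
  have hAnn : (0:ℝ) ≤ ‖A u‖ := norm_nonneg _
  have hKunn : (0:ℝ) ≤ ‖K u‖ := norm_nonneg _
  nlinarith [mul_le_mul_of_nonneg_left hKP hc₂,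
    mul_le_mul_of_nonneg_left hwbd (mul_nonneg hc₂ hKnn),
    mul_nonneg (mul_nonneg (mul_nonneg hc₂ hKnn) hc₁) hKunn,
    mul_nonneg hc₁ hKunn, mul_nonneg hc₂ hAnn]
end

section
/- Let q ≥ 0 be an integer and φ ∈ 𝓜 satisfy ∫₁^∞ dt/(t φ²(t)) < ∞. Then the Hörmander space H^{q+n/2,φ}(ℝⁿ) embeds continuously into C^q_b(ℝⁿ): every w ∈ H^{q+n/2,φ}(ℝⁿ) is (after modification on a null set) q times continuously differentiable with all partial derivatives up to order q bounded, and ‖w‖_{C^q_b} ≤ c‖w‖_{q+n/2,φ} for a constant c independent of w. -/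
open Filter MeasureTheory ENNReal
open scoped FourierTransform

/-- The Hörmander weight `⟨ξ⟩^{2s} φ(⟨ξ⟩)²`. -/
noncomputable def hWeight {n : ℕ} (s : ℝ) (φ : ℝ → ℝ) (ξ : EuclideanSpace ℝ (Fin n)) : ℝ :=
  (1 + ‖ξ‖ ^ 2) ^ s * (φ (Real.sqrt (1 + ‖ξ‖ ^ 2))) ^ 2

/-- The square of the `H^{s,φ}` norm of a distribution with Fourier transform `W`. -/
noncomputable def hInt (n : ℕ) (s : ℝ) (φ : ℝ → ℝ) (W : EuclideanSpace ℝ (Fin n) → ℂ) :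
    ℝ≥0∞ :=
  ∫⁻ ξ, ENNReal.ofReal (hWeight s φ ξ * ‖W ξ‖ ^ 2)


open MeasureTheory ENNReal Set Metric

lemma lintegral_norm_polar {E : Type*} [NormedAddCommGroup E] [NormedSpace ℝ E]
    [MeasurableSpace E] [BorelSpace E] [FiniteDimensional ℝ E] [Nontrivial E]
    (μ : Measure E) [μ.IsAddHaarMeasure] (G : ℝ → ℝ≥0∞) (hG : Measurable G) :
    ∫⁻ x, G ‖x‖ ∂μ = μ.toSphere Set.univ *
      ∫⁻ r in Set.Ioi (0:ℝ), ENNReal.ofReal (r ^ (Module.finrank ℝ E - 1)) * G r := by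
  have h1 : ∫⁻ x, G ‖x‖ ∂μ = ∫⁻ x in ({(0:E)}ᶜ), G ‖x‖ ∂μ := by
    rw [restrict_compl_singleton]
  rw [h1, ← lintegral_subtype_comap (measurableSet_singleton (0:E)).compl]
  have h2 := (μ.measurePreserving_homeomorphUnitSphereProd).lintegral_comp
    (f := fun p : sphere (0:E) 1 × Ioi (0:ℝ) => G p.2.1)
    (hG.comp (measurable_subtype_coe.comp measurable_snd))
  have h3 : ∀ x : ({(0:E)}ᶜ : Set E),
      G ((homeomorphUnitSphereProd E x).2 : ℝ) = G ‖(x:E)‖ := fun x => by simp [homeomorphUnitSphereProd_apply_snd_coe]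
  simp only [h3] at h2
  rw [h2, lintegral_prod (fun p : (sphere (0:E) 1) × (Ioi (0:ℝ)) => G (p.2 : ℝ))
    ((hG.comp (measurable_subtype_coe.comp measurable_snd)).aemeasurable)]
  have h4 : ∫⁻ (y : Ioi (0:ℝ)), G y ∂(Measure.volumeIoiPow (Module.finrank ℝ E - 1)) =
      ∫⁻ r in Set.Ioi (0:ℝ), ENNReal.ofReal (r ^ (Module.finrank ℝ E - 1)) * G r := by
    rw [Measure.volumeIoiPow,
      lintegral_withDensity_eq_lintegral_mul _
        ((measurable_subtype_coe.pow_const _).ennreal_ofReal)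
        (show Measurable fun y : Ioi (0:ℝ) => G ↑y from hG.comp measurable_subtype_coe)]
    exact lintegral_subtype_comap measurableSet_Ioi
      (fun r => ENNReal.ofReal (r ^ (Module.finrank ℝ E - 1)) * G r)
  simp only [h4, lintegral_const]
  ring


lemma oneD_finite (n : ℕ) (hn : 1 ≤ n) (φ : ℝ → ℝ) (hmeas : Measurable φ)
    (hpos : ∀ t, 1 ≤ t → 0 < φ t)
    (hloc : ∀ b : ℝ, 1 < b → ∃ C > 0, ∀ t ∈ Set.Icc (1:ℝ) b, φ t ≤ C ∧ C⁻¹ ≤ φ t)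
    (hint : (∫⁻ t in Set.Ioi (1:ℝ), ENNReal.ofReal (1 / (t * (φ t) ^ 2))) < ⊤) :
    ∫⁻ r in Set.Ioi (0:ℝ), ENNReal.ofReal (r ^ (n - 1)) *
      ENNReal.ofReal ((1 + r ^ 2) ^ (-(n:ℝ)/2) * ((φ (Real.sqrt (1 + r ^ 2))) ^ 2)⁻¹) < ⊤ := by
  set F : ℝ → ℝ≥0∞ := fun r => ENNReal.ofReal (r ^ (n - 1)) *
      ENNReal.ofReal ((1 + r ^ 2) ^ (-(n:ℝ)/2) * ((φ (Real.sqrt (1 + r ^ 2))) ^ 2)⁻¹) with hF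
  have hsplit : Ioc (0:ℝ) 1 ∪ Ioi (1:ℝ) = Ioi 0 := Ioc_union_Ioi_eq_Ioi zero_le_one
  rw [← hsplit, lintegral_union measurableSet_Ioi (Ioc_disjoint_Ioi le_rfl)]
  refine ENNReal.add_lt_top.2 ⟨?_, ?_⟩
  · -- small r part
    obtain ⟨C, hC, hCb⟩ := hloc 2 one_lt_two
    have hbound : ∀ r ∈ Ioc (0:ℝ) 1, F r ≤ ENNReal.ofReal (C ^ 2) := by
      intro r hr
      have hr0 : 0 < r := hr.1
      have hr1 : r ≤ 1 := hr.2
      have ht1 : (1:ℝ) ≤ Real.sqrt (1 + r ^ 2) := by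
        have := Real.sqrt_le_sqrt (show (1:ℝ) ≤ 1 + r ^ 2 by nlinarith)
        simpa using this
      have ht2 : Real.sqrt (1 + r ^ 2) ≤ 2 := by
        rw [show (2:ℝ) = Real.sqrt (2^2) by rw [Real.sqrt_sq]; norm_num]
        exact Real.sqrt_le_sqrt (by nlinarith)
      obtain ⟨hφle, hφge⟩ := hCb _ ⟨ht1, ht2⟩
      have hφpos : 0 < φ (Real.sqrt (1 + r ^ 2)) := hpos _ ht1
      have h2 : ((φ (Real.sqrt (1 + r ^ 2))) ^ 2)⁻¹ ≤ C ^ 2 := by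
        have hstep : (C⁻¹) ^ 2 ≤ (φ (Real.sqrt (1 + r ^ 2))) ^ 2 :=
          pow_le_pow_left₀ (by positivity) hφge 2
        have h := inv_anti₀ (by positivity : (0:ℝ) < (C⁻¹) ^ 2) hstep
        simpa [inv_pow, inv_inv] using h
      have h3 : (1 + r ^ 2) ^ (-(n:ℝ)/2) ≤ 1 :=
        Real.rpow_le_one_of_one_le_of_nonpos (by nlinarith)
          (by have : (0:ℝ) ≤ n := Nat.cast_nonneg n; linarith)
      have e1 : ENNReal.ofReal (r ^ (n-1)) ≤ 1 := by
        rw [show (1:ℝ≥0∞) = ENNReal.ofReal 1 by simp]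
        exact ENNReal.ofReal_le_ofReal (pow_le_one₀ hr0.le hr1)
      have e2 : ENNReal.ofReal ((1+r^2)^(-(n:ℝ)/2) * ((φ (Real.sqrt (1+r^2))) ^ 2)⁻¹) ≤
          ENNReal.ofReal (C^2) := by
        apply ENNReal.ofReal_le_ofReal
        calc (1+r^2)^(-(n:ℝ)/2) * ((φ (Real.sqrt (1+r^2))) ^ 2)⁻¹ ≤ 1 * C^2 :=
              mul_le_mul h3 h2 (by positivity) zero_le_one
          _ = C^2 := one_mul _
      calc F r ≤ 1 * ENNReal.ofReal (C^2) := mul_le_mul' e1 e2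
        _ = _ := one_mul _
    calc ∫⁻ r in Ioc (0:ℝ) 1, F r ≤ ∫⁻ _ in Ioc (0:ℝ) 1, ENNReal.ofReal (C ^ 2) :=
          setLIntegral_mono' measurableSet_Ioc hbound
      _ = ENNReal.ofReal (C ^ 2) * volume (Ioc (0:ℝ) 1) := by rw [setLIntegral_const]
      _ < ⊤ := ENNReal.mul_lt_top ENNReal.ofReal_lt_top (by simp [Real.volume_Ioc])
  · -- large r part: change of variables t = sqrt (1+r^2)
    set g : ℝ → ℝ := fun r => Real.sqrt (1 + r ^ 2) with hg
    set g' : ℝ → ℝ := fun r => r / Real.sqrt (1 + r ^ 2) with hg'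
    set H : ℝ → ℝ≥0∞ := fun t => ENNReal.ofReal (1 / (t * (φ t) ^ 2)) with hH
    have hderiv : ∀ r ∈ Ioi (1:ℝ), HasDerivWithinAt g (g' r) (Ioi 1) r := by
      intro r hr
      have h0 : (1 + r ^ 2) ≠ 0 := by nlinarith [mem_Ioi.1 hr]
      have h1 : HasDerivAt (fun x : ℝ => 1 + x ^ 2) (2 * r) r := by
        simpa using (hasDerivAt_pow 2 r).const_add 1
      have h2 := (Real.hasDerivAt_sqrt h0).comp r h1
      have : (1 / (2 * Real.sqrt (1 + r ^ 2))) * (2 * r) = g' r := by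
        have hs : Real.sqrt (1 + r ^ 2) ≠ 0 := by
          positivity
        field_simp [hg']
        rw [hg']; field_simp
      rw [this] at h2
      exact h2.hasDerivWithinAt
    have hinj : InjOn g (Ioi 1) := by
      intro a ha b hb hab
      have ha0 : (0:ℝ) < a := lt_trans one_pos (mem_Ioi.1 ha)
      have hb0 : (0:ℝ) < b := lt_trans one_pos (mem_Ioi.1 hb)
      have : 1 + a ^ 2 = 1 + b ^ 2 := by
        have := congrArg (fun x => x ^ 2) hab
        simpa [hg, Real.sq_sqrt, show (0:ℝ) ≤ 1 + a ^ 2 by positivity,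
          show (0:ℝ) ≤ 1 + b ^ 2 by positivity] using this
      nlinarith
    have himg : g '' (Ioi 1) ⊆ Ioi 1 := by
      rintro - ⟨r, hr, rfl⟩
      have hr1 : (1:ℝ) < r := mem_Ioi.1 hr
      have : (1:ℝ) < Real.sqrt (1 + r ^ 2) := by
        have h := Real.sqrt_lt_sqrt (by norm_num) (show (1:ℝ) < 1 + r ^ 2 by nlinarith)
        simpa using h
      exact this
    have key : ∫⁻ t in g '' (Ioi 1), H t =
        ∫⁻ r in Ioi (1:ℝ), ENNReal.ofReal |g' r| * H (g r) := by
      have := lintegral_image_eq_lintegral_abs_det_fderiv_mul volume measurableSet_Ioi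
        (f' := fun r => (1 : ℝ →L[ℝ] ℝ).smulRight (g' r))
        (fun x hx => (hderiv x hx).hasFDerivWithinAt) hinj H
      simpa [ContinuousLinearMap.det_toSpanSingleton, ContinuousLinearMap.det_smulRight] using this
    have hpt : ∀ r ∈ Ioi (1:ℝ), F r ≤ 2 * (ENNReal.ofReal |g' r| * H (g r)) := by
      intro r hr
      have hr1 : (1:ℝ) < r := mem_Ioi.1 hr
      have hr0 : (0:ℝ) < r := lt_trans one_pos hr1
      set s := Real.sqrt (1 + r ^ 2) with hs
      have hs0 : 0 < s := Real.sqrt_pos.2 (by positivity)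
      have hs2 : s ^ 2 = 1 + r ^ 2 := Real.sq_sqrt (by positivity)
      have hs1 : (1:ℝ) ≤ s := by nlinarith
      have hsle : s ≤ 2 * r := by
        have := Real.sqrt_le_sqrt (show 1 + r ^ 2 ≤ (2*r) ^ 2 by nlinarith)
        rwa [Real.sqrt_sq (by positivity)] at this
      have hP : 0 < φ s := hpos s hs1
      -- real inequality
      have hmain : r ^ (n - 1) * ((1 + r ^ 2) ^ (-(n:ℝ)/2) * ((φ s) ^ 2)⁻¹) ≤
          2 * (|g' r| * (1 / (s * (φ s) ^ 2))) := by
        have hA : r ^ (n - 1) * (1 + r ^ 2) ^ (-(n:ℝ)/2) ≤ s⁻¹ := by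
          have h1 : r ^ (n - 1) ≤ s ^ (n - 1) := by
            apply pow_le_pow_left₀ hr0.le
            nlinarith
          have h2 : s ^ (n - 1) = (1 + r ^ 2) ^ (((n:ℝ) - 1)/2) := by
            rw [hs, Real.sqrt_eq_rpow,
              ← Real.rpow_natCast ((1 + r ^ 2) ^ ((1:ℝ)/2)) (n-1),
              ← Real.rpow_mul (by positivity)]
            congr 1
            rw [Nat.cast_sub hn]
            push_cast
            ring
          calc r ^ (n - 1) * (1 + r ^ 2) ^ (-(n:ℝ)/2)
              ≤ (1 + r ^ 2) ^ (((n:ℝ) - 1)/2) * (1 + r ^ 2) ^ (-(n:ℝ)/2) := by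
                apply mul_le_mul_of_nonneg_right (h2 ▸ h1) (Real.rpow_nonneg (by positivity) _)
            _ = (1 + r ^ 2) ^ (((n:ℝ) - 1)/2 + (-(n:ℝ)/2)) :=
                (Real.rpow_add (by positivity) _ _).symm
            _ = (1 + r ^ 2) ^ (-(1:ℝ)/2) := by congr 1; ring
            _ = s⁻¹ := by
                rw [show (-(1:ℝ)/2) = -((1:ℝ)/2) by ring, Real.rpow_neg (by positivity),
                  ← Real.sqrt_eq_rpow]
        have hB : s⁻¹ ≤ 2 * r / (1 + r ^ 2) := by
          rw [le_div_iff₀ (by positivity)]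
          calc s⁻¹ * (1 + r ^ 2) = s⁻¹ * (s * s) := by rw [← hs2]; ring
            _ = s := by field_simp
            _ ≤ 2 * r := hsle
        have hgr : |g' r| = r / s := by
          rw [hg', abs_of_nonneg (by positivity)]
        rw [hgr]
        calc r ^ (n - 1) * ((1 + r ^ 2) ^ (-(n:ℝ)/2) * ((φ s) ^ 2)⁻¹)
            = (r ^ (n - 1) * (1 + r ^ 2) ^ (-(n:ℝ)/2)) * ((φ s) ^ 2)⁻¹ := by ring
          _ ≤ (2 * r / (1 + r ^ 2)) * ((φ s) ^ 2)⁻¹ := by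
              apply mul_le_mul_of_nonneg_right (hA.trans hB) (by positivity)
          _ = 2 * ((r / s) * (1 / (s * (φ s) ^ 2))) := by
              rw [← hs2]; field_simp
      calc F r = ENNReal.ofReal (r ^ (n - 1) * ((1 + r ^ 2) ^ (-(n:ℝ)/2) * ((φ s) ^ 2)⁻¹)) := by
            rw [hF, ENNReal.ofReal_mul (by positivity)]
        _ ≤ ENNReal.ofReal (2 * (|g' r| * (1 / (s * (φ s) ^ 2)))) :=
            ENNReal.ofReal_le_ofReal hmain
        _ = 2 * (ENNReal.ofReal |g' r| * H (g r)) := by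
            rw [ENNReal.ofReal_mul (by norm_num), ENNReal.ofReal_mul (abs_nonneg _)]
            norm_num [hH]
            rfl
    calc ∫⁻ r in Ioi (1:ℝ), F r
        ≤ ∫⁻ r in Ioi (1:ℝ), 2 * (ENNReal.ofReal |g' r| * H (g r)) :=
          setLIntegral_mono' measurableSet_Ioi hpt
      _ = 2 * ∫⁻ r in Ioi (1:ℝ), ENNReal.ofReal |g' r| * H (g r) :=
          lintegral_const_mul' _ _ (by norm_num)
      _ = 2 * ∫⁻ t in g '' (Ioi 1), H t := by rw [key]
      _ ≤ 2 * ∫⁻ t in Ioi (1:ℝ), H t := by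
          gcongr
      _ < ⊤ := ENNReal.mul_lt_top (by norm_num) hint

noncomputable def Kint (n : ℕ) (φ : ℝ → ℝ) : ℝ≥0∞ :=
  ∫⁻ ξ : EuclideanSpace ℝ (Fin n), ENNReal.ofReal
    ((1 + ‖ξ‖ ^ 2) ^ (-(n:ℝ)/2) * ((φ (Real.sqrt (1 + ‖ξ‖ ^ 2))) ^ 2)⁻¹)

lemma measurable_G (n : ℕ) (φ : ℝ → ℝ) (hmeas : Measurable φ) :
    Measurable (fun r : ℝ => ENNReal.ofReal
      ((1 + r ^ 2) ^ (-(n:ℝ)/2) * ((φ (Real.sqrt (1 + r ^ 2))) ^ 2)⁻¹)) := by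
  apply Measurable.ennreal_ofReal
  apply Measurable.mul
  · exact (Continuous.rpow_const (by continuity)
      (fun x => Or.inl (by positivity))).measurable
  · exact (((hmeas.comp (Real.continuous_sqrt.comp
      (by continuity : Continuous fun r : ℝ => 1 + r ^ 2)).measurable).pow_const 2)).inv

lemma Kint_lt_top (n : ℕ) (hn : 1 ≤ n) (φ : ℝ → ℝ) (hmeas : Measurable φ)
    (hpos : ∀ t, 1 ≤ t → 0 < φ t)
    (hloc : ∀ b : ℝ, 1 < b → ∃ C > 0, ∀ t ∈ Set.Icc (1:ℝ) b, φ t ≤ C ∧ C⁻¹ ≤ φ t)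
    (hint : (∫⁻ t in Set.Ioi (1:ℝ), ENNReal.ofReal (1 / (t * (φ t) ^ 2))) < ⊤) :
    Kint n φ < ⊤ := by
  haveI : Nontrivial (EuclideanSpace ℝ (Fin n)) :=
    Module.nontrivial_of_finrank_pos (R := ℝ)
      (by rw [finrank_euclideanSpace_fin]; omega)
  set G : ℝ → ℝ≥0∞ := fun r => ENNReal.ofReal
      ((1 + r ^ 2) ^ (-(n:ℝ)/2) * ((φ (Real.sqrt (1 + r ^ 2))) ^ 2)⁻¹) with hG
  have hGm : Measurable G := measurable_G n φ hmeas
  have hpolar := lintegral_norm_polar (volume : Measure (EuclideanSpace ℝ (Fin n))) G hGm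
  have : Kint n φ = ∫⁻ x : EuclideanSpace ℝ (Fin n), G ‖x‖ := rfl
  rw [this, hpolar, finrank_euclideanSpace_fin]
  exact ENNReal.mul_lt_top (measure_lt_top _ _) (oneD_finite n hn φ hmeas hpos hloc hint)

lemma integrable_pow_mul_norm (n q j : ℕ) (hn : 1 ≤ n) (hj : j ≤ q) (φ : ℝ → ℝ)
    (hmeas : Measurable φ) (hpos : ∀ t, 1 ≤ t → 0 < φ t)
    (W : EuclideanSpace ℝ (Fin n) → ℂ) (hW : Measurable W)
    (hA : hInt n ((q : ℝ) + n / 2) φ W < ⊤) (hK : Kint n φ < ⊤) :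
    Integrable (fun v : EuclideanSpace ℝ (Fin n) => ‖v‖ ^ j * ‖W v‖) ∧
      ∫ v : EuclideanSpace ℝ (Fin n), ‖v‖ ^ j * ‖W v‖ ≤
        Real.sqrt (hInt n ((q : ℝ) + n / 2) φ W).toReal * Real.sqrt (Kint n φ).toReal := by
  set s : ℝ := (q : ℝ) + n / 2 with hs
  set f : EuclideanSpace ℝ (Fin n) → ℝ≥0∞ := fun v =>
    ENNReal.ofReal ((1 + ‖v‖ ^ 2) ^ (s/2) * φ (Real.sqrt (1 + ‖v‖ ^ 2)) * ‖W v‖) with hf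
  set g : EuclideanSpace ℝ (Fin n) → ℝ≥0∞ := fun v =>
    ENNReal.ofReal ((1 + ‖v‖ ^ 2) ^ (-(n:ℝ)/4) * (φ (Real.sqrt (1 + ‖v‖ ^ 2)))⁻¹) with hgdef
  have base_pos : ∀ v : EuclideanSpace ℝ (Fin n), (0:ℝ) < 1 + ‖v‖ ^ 2 := fun v => by positivity
  have sqrt_one_le : ∀ v : EuclideanSpace ℝ (Fin n),
      (1:ℝ) ≤ Real.sqrt (1 + ‖v‖ ^ 2) := fun v => by
    have := Real.sqrt_le_sqrt (show (1:ℝ) ≤ 1 + ‖v‖ ^ 2 by nlinarith [norm_nonneg v])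
    simpa using this
  have hφv : ∀ v : EuclideanSpace ℝ (Fin n), 0 < φ (Real.sqrt (1 + ‖v‖ ^ 2)) :=
    fun v => hpos _ (sqrt_one_le v)
  have hfm : Measurable f := by
    apply Measurable.ennreal_ofReal
    apply Measurable.mul
    apply Measurable.mul
    · exact (Continuous.rpow_const (by continuity) (fun x => Or.inl (by positivity))).measurable
    · exact hmeas.comp (Real.continuous_sqrt.comp
        (by continuity : Continuous fun v : EuclideanSpace ℝ (Fin n) => 1 + ‖v‖ ^ 2)).measurable
    · exact hW.norm
  have hgm : Measurable g := by
    apply Measurable.ennreal_ofReal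
    apply Measurable.mul
    · exact (Continuous.rpow_const (by continuity) (fun x => Or.inl (by positivity))).measurable
    · exact (hmeas.comp (Real.continuous_sqrt.comp
        (by continuity : Continuous fun v : EuclideanSpace ℝ (Fin n) => 1 + ‖v‖ ^ 2)).measurable).inv
  -- Hölder
  have hconj : Real.HolderConjugate 2 2 := Real.HolderConjugate.two_two
  have hHo := ENNReal.lintegral_mul_le_Lp_mul_Lq volume hconj hfm.aemeasurable hgm.aemeasurable
  have hpow2 : ∀ x : ℝ≥0∞, x ^ (2:ℝ) = x ^ (2:ℕ) := fun x => by
    rw [← ENNReal.rpow_natCast]; norm_num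
  have hf2 : ∫⁻ v, f v ^ (2:ℝ) = hInt n s φ W := by
    rw [hInt]
    apply lintegral_congr
    intro v
    rw [hpow2, ← ENNReal.ofReal_pow (mul_nonneg (mul_nonneg
      (Real.rpow_nonneg (base_pos v).le _) (hφv v).le) (norm_nonneg _))]
    congr 1
    rw [hWeight]
    have : ((1 + ‖v‖ ^ 2) ^ (s/2)) ^ (2:ℕ) = (1 + ‖v‖ ^ 2) ^ s := by
      rw [← Real.rpow_natCast ((1 + ‖v‖ ^ 2) ^ (s/2)) 2, ← Real.rpow_mul (base_pos v).le]
      norm_num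
    rw [mul_pow, mul_pow, this]
  have hg2 : ∫⁻ v, g v ^ (2:ℝ) = Kint n φ := by
    rw [Kint]
    apply lintegral_congr
    intro v
    rw [hpow2, ← ENNReal.ofReal_pow (mul_nonneg
      (Real.rpow_nonneg (base_pos v).le _) (inv_nonneg.2 (hφv v).le))]
    congr 1
    have : ((1 + ‖v‖ ^ 2) ^ (-(n:ℝ)/4)) ^ (2:ℕ) = (1 + ‖v‖ ^ 2) ^ (-(n:ℝ)/2) := by
      rw [← Real.rpow_natCast ((1 + ‖v‖ ^ 2) ^ (-(n:ℝ)/4)) 2, ← Real.rpow_mul (base_pos v).le]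
      norm_num
      congr 1
      ring
    rw [mul_pow, this, inv_pow]
  have hlow : ∫⁻ v, ENNReal.ofReal (‖v‖ ^ j * ‖W v‖) ≤ ∫⁻ v, (f * g) v := by
    apply lintegral_mono
    intro v
    have hfg : (f * g) v = ENNReal.ofReal ((1 + ‖v‖ ^ 2) ^ ((q:ℝ)/2) * ‖W v‖) := by
      simp only [Pi.mul_apply, hf, hgdef]
      rw [← ENNReal.ofReal_mul (mul_nonneg (mul_nonneg
        (Real.rpow_nonneg (base_pos v).le _) (hφv v).le) (norm_nonneg _))]
      congr 1
      have hre : (1 + ‖v‖ ^ 2) ^ (s/2) * (1 + ‖v‖ ^ 2) ^ (-(n:ℝ)/4) =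
          (1 + ‖v‖ ^ 2) ^ ((q:ℝ)/2) := by
        rw [← Real.rpow_add (base_pos v)]
        congr 1
        rw [hs]
        ring
      calc (1 + ‖v‖ ^ 2) ^ (s/2) * φ (Real.sqrt (1 + ‖v‖ ^ 2)) * ‖W v‖ *
            ((1 + ‖v‖ ^ 2) ^ (-(n:ℝ)/4) * (φ (Real.sqrt (1 + ‖v‖ ^ 2)))⁻¹)
          = ((1 + ‖v‖ ^ 2) ^ (s/2) * (1 + ‖v‖ ^ 2) ^ (-(n:ℝ)/4)) *
            (φ (Real.sqrt (1 + ‖v‖ ^ 2)) * (φ (Real.sqrt (1 + ‖v‖ ^ 2)))⁻¹) * ‖W v‖ := by ring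
        _ = (1 + ‖v‖ ^ 2) ^ ((q:ℝ)/2) * ‖W v‖ := by
            rw [hre, mul_inv_cancel₀ (hφv v).ne', mul_one]
    rw [hfg]
    apply ENNReal.ofReal_le_ofReal
    apply mul_le_mul_of_nonneg_right _ (norm_nonneg _)
    calc ‖v‖ ^ j ≤ Real.sqrt (1 + ‖v‖ ^ 2) ^ j := by
          apply pow_le_pow_left₀ (norm_nonneg v)
          have := Real.sqrt_le_sqrt (show ‖v‖ ^ 2 ≤ 1 + ‖v‖ ^ 2 by nlinarith [norm_nonneg v])
          rwa [Real.sqrt_sq (norm_nonneg v)] at this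
      _ = (1 + ‖v‖ ^ 2) ^ ((j:ℝ)/2) := by
          rw [Real.sqrt_eq_rpow, ← Real.rpow_natCast ((1 + ‖v‖ ^ 2) ^ ((1:ℝ)/2)) j,
            ← Real.rpow_mul (base_pos v).le]
          congr 1
          ring
      _ ≤ (1 + ‖v‖ ^ 2) ^ ((q:ℝ)/2) := by
          apply Real.rpow_le_rpow_of_exponent_le (by nlinarith [norm_nonneg v])
          have : (j:ℝ) ≤ (q:ℝ) := by exact_mod_cast hj
          linarith
  have hB : ∫⁻ v, ENNReal.ofReal (‖v‖ ^ j * ‖W v‖) ≤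
      (hInt n s φ W) ^ ((1:ℝ)/2) * (Kint n φ) ^ ((1:ℝ)/2) := by
    calc ∫⁻ v, ENNReal.ofReal (‖v‖ ^ j * ‖W v‖) ≤ ∫⁻ v, (f * g) v := hlow
      _ ≤ (∫⁻ v, f v ^ (2:ℝ)) ^ ((1:ℝ)/2) * (∫⁻ v, g v ^ (2:ℝ)) ^ ((1:ℝ)/2) := by
          simpa using hHo
      _ = (hInt n s φ W) ^ ((1:ℝ)/2) * (Kint n φ) ^ ((1:ℝ)/2) := by rw [hf2, hg2]
  have hRtop : (hInt n s φ W) ^ ((1:ℝ)/2) * (Kint n φ) ^ ((1:ℝ)/2) < ⊤ :=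
    ENNReal.mul_lt_top (ENNReal.rpow_lt_top_of_nonneg (by norm_num) hA.ne)
      (ENNReal.rpow_lt_top_of_nonneg (by norm_num) hK.ne)
  have hmeasInt : AEStronglyMeasurable (fun v : EuclideanSpace ℝ (Fin n) => ‖v‖ ^ j * ‖W v‖)
      volume := ((measurable_norm.pow_const j).mul hW.norm).aestronglyMeasurable
  have hintg : Integrable (fun v : EuclideanSpace ℝ (Fin n) => ‖v‖ ^ j * ‖W v‖) := by
    refine ⟨hmeasInt, ?_⟩
    rw [hasFiniteIntegral_iff_ofReal (Filter.Eventually.of_forall fun v => by positivity)]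
    exact lt_of_le_of_lt hB hRtop
  refine ⟨hintg, ?_⟩
  rw [integral_eq_lintegral_of_nonneg_ae (Filter.Eventually.of_forall fun v => by positivity)
    hmeasInt]
  have := ENNReal.toReal_mono hRtop.ne hB
  refine le_trans this ?_
  rw [ENNReal.toReal_mul, Real.sqrt_eq_rpow, Real.sqrt_eq_rpow,
    ENNReal.toReal_rpow, ENNReal.toReal_rpow]

lemma fourier_deriv_bound (n q j : ℕ) (hj : j ≤ q)
    (W : EuclideanSpace ℝ (Fin n) → ℂ) (hW : Measurable W)
    (hi : ∀ k : ℕ, (k : ℕ∞) ≤ (q : ℕ∞) →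
      Integrable (fun v : EuclideanSpace ℝ (Fin n) => ‖v‖ ^ k * ‖W v‖))
    (x : EuclideanSpace ℝ (Fin n)) :
    ‖iteratedFDeriv ℝ j (𝓕 W) x‖ ≤
      (2 * Real.pi) ^ j * ∫ v : EuclideanSpace ℝ (Fin n), ‖v‖ ^ j * ‖W v‖ := by
  rw [Real.iteratedFDeriv_fourier (N := (q:ℕ∞)) hi hW.aestronglyMeasurable
    (by exact_mod_cast hj)]
  refine le_trans (VectorFourier.norm_fourierIntegral_le_integral_norm _ _ _ _ _) ?_
  have hbd : ∀ v : EuclideanSpace ℝ (Fin n),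
      ‖VectorFourier.fourierPowSMulRight (innerSL ℝ) W v j‖ ≤ (2 * Real.pi) ^ j * (‖v‖ ^ j * ‖W v‖) := by
    intro v
    refine le_trans (VectorFourier.norm_fourierPowSMulRight_le _ _ _ _) ?_
    have hL : ‖innerSL (E := EuclideanSpace ℝ (Fin n)) ℝ‖ ≤ 1 := norm_innerSL_le _
    have h2π : 2 * Real.pi * ‖innerSL (E := EuclideanSpace ℝ (Fin n)) ℝ‖ ≤ 2 * Real.pi := by
      nlinarith [Real.pi_pos]
    calc (2 * Real.pi * ‖innerSL (E := EuclideanSpace ℝ (Fin n)) ℝ‖) ^ j * ‖v‖ ^ j * ‖W v‖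
        ≤ (2 * Real.pi) ^ j * ‖v‖ ^ j * ‖W v‖ := by
          apply mul_le_mul_of_nonneg_right _ (norm_nonneg _)
          apply mul_le_mul_of_nonneg_right _ (by positivity)
          exact pow_le_pow_left₀ (by positivity) h2π j
      _ = (2 * Real.pi) ^ j * (‖v‖ ^ j * ‖W v‖) := by ring
  calc ∫ v, ‖VectorFourier.fourierPowSMulRight (innerSL ℝ) W v j‖
      ≤ ∫ v : EuclideanSpace ℝ (Fin n), (2 * Real.pi) ^ j * (‖v‖ ^ j * ‖W v‖) := by
        apply integral_mono_of_nonneg (Filter.Eventually.of_forall fun v => norm_nonneg _)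
          (((hi j (by exact_mod_cast hj))).const_mul _)
          (Filter.Eventually.of_forall hbd)
    _ = (2 * Real.pi) ^ j * ∫ v : EuclideanSpace ℝ (Fin n), ‖v‖ ^ j * ‖W v‖ :=
        integral_const_mul _ _

theorem hormander_embedding_into_Cq' (n : ℕ) (hn : 1 ≤ n) (q : ℕ) (φ : ℝ → ℝ)
    (hmeas : Measurable φ) (hpos : ∀ t, 1 ≤ t → 0 < φ t)
    (hloc : ∀ b : ℝ, 1 < b → ∃ C > 0, ∀ t ∈ Set.Icc (1:ℝ) b, φ t ≤ C ∧ C⁻¹ ≤ φ t)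
    (hint : (∫⁻ t in Set.Ioi (1:ℝ), ENNReal.ofReal (1 / (t * (φ t) ^ 2))) < ⊤) :
    ∃ c : ℝ, 0 < c ∧
      ∀ W : EuclideanSpace ℝ (Fin n) → ℂ, Measurable W →
        hInt n ((q : ℝ) + n / 2) φ W < ⊤ →
        ContDiff ℝ (q : ℕ∞) (𝓕⁻ W) ∧
        ∀ j : ℕ, j ≤ q → ∀ x : EuclideanSpace ℝ (Fin n),
          ‖iteratedFDeriv ℝ j (𝓕⁻ W) x‖ ≤
            c * Real.sqrt (hInt n ((q : ℝ) + n / 2) φ W).toReal := by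
  have hK : Kint n φ < ⊤ := Kint_lt_top n hn φ hmeas hpos hloc hint
  refine ⟨(2 * Real.pi) ^ q * Real.sqrt (Kint n φ).toReal + 1, by positivity, ?_⟩
  intro W hW hA
  have hi : ∀ k : ℕ, (k : ℕ∞) ≤ (q : ℕ∞) →
      Integrable (fun v : EuclideanSpace ℝ (Fin n) => ‖v‖ ^ k * ‖W v‖) := fun k hk =>
    (integrable_pow_mul_norm n q k hn (by exact_mod_cast hk) φ hmeas hpos W hW hA hK).1
  have hinv : 𝓕⁻ W = (𝓕 W) ∘
      (LinearIsometryEquiv.neg ℝ (E := EuclideanSpace ℝ (Fin n))) := by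
    ext w
    exact Real.fourierInv_eq_fourier_neg W w
  constructor
  · rw [hinv]
    exact (Real.contDiff_fourier hi).comp
      (LinearIsometryEquiv.neg ℝ (E := EuclideanSpace ℝ (Fin n))).contDiff
  · intro j hj x
    rw [hinv, LinearIsometryEquiv.norm_iteratedFDeriv_comp_right]
    refine le_trans (fourier_deriv_bound n q j hj W hW hi _) ?_
    have hbd := (integrable_pow_mul_norm n q j hn hj φ hmeas hpos W hW hA hK).2
    set A := Real.sqrt (hInt n ((q : ℝ) + n / 2) φ W).toReal with hAdef
    set K := Real.sqrt (Kint n φ).toReal with hKdef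
    have hA0 : 0 ≤ A := Real.sqrt_nonneg _
    have hK0 : 0 ≤ K := Real.sqrt_nonneg _
    have hpi : (1:ℝ) ≤ 2 * Real.pi := by nlinarith [Real.pi_gt_three]
    calc (2 * Real.pi) ^ j * ∫ v : EuclideanSpace ℝ (Fin n), ‖v‖ ^ j * ‖W v‖
        ≤ (2 * Real.pi) ^ j * (A * K) := by
          apply mul_le_mul_of_nonneg_left hbd (by positivity)
      _ ≤ (2 * Real.pi) ^ q * (A * K) := by
          apply mul_le_mul_of_nonneg_right (pow_le_pow_right₀ hpi hj)
          positivity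
      _ = ((2 * Real.pi) ^ q * K) * A := by ring
      _ ≤ ((2 * Real.pi) ^ q * K + 1) * A := by nlinarith

/-- Hörmander's embedding theorem: if `∫₁^∞ dt/(tφ²(t)) < ∞`, then
`H^{q+n/2,φ}(ℝⁿ) ↪ C^q_b(ℝⁿ)` continuously.  A distribution `w ∈ H^{q+n/2,φ}` is recovered
from its Fourier transform `W` by the Fourier inversion integral `w = 𝓕⁻ W`; it is `q`
times continuously differentiable with all derivatives up to order `q` bounded by a
constant multiple of `‖w‖_{q+n/2,φ}`. -/

theorem hormander_embedding_into_Cq (n : ℕ) (hn : 1 ≤ n) (q : ℕ) (φ : ℝ → ℝ)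
    (hφ : MClass φ)
    (hint : (∫⁻ t in Set.Ioi (1:ℝ), ENNReal.ofReal (1 / (t * (φ t) ^ 2))) < ⊤) :
    ∃ c : ℝ, 0 < c ∧
      ∀ W : EuclideanSpace ℝ (Fin n) → ℂ, Measurable W →
        hInt n ((q : ℝ) + n / 2) φ W < ⊤ →
        ContDiff ℝ (q : ℕ∞) (𝓕⁻ W) ∧
        ∀ j : ℕ, j ≤ q → ∀ x : EuclideanSpace ℝ (Fin n),
          ‖iteratedFDeriv ℝ j (𝓕⁻ W) x‖ ≤
            c * Real.sqrt (hInt n ((q : ℝ) + n / 2) φ W).toReal := by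
  obtain ⟨hmeas, hpos, hloc, -⟩ := hφ
  exact hormander_embedding_into_Cq' n hn q φ hmeas hpos hloc hint
end

section
/- Let ψ ∈ 𝓑 be such that ψ(t)/t is bounded near infinity, and define χ(t) := t/ψ(t). If ψ is pseudoconcave in a neighborhood of +∞ (hence an interpolation parameter), then χ is also pseudoconcave in a neighborhood of +∞. -/
/-- The class `𝓑` of interpolation function parameters. -/
def BClass (ψ : ℝ → ℝ) : Prop :=
  Measurable ψ ∧ (∀ t : ℝ, 0 < t → 0 < ψ t) ∧
  (∀ a b : ℝ, 0 < a → a < b → ∃ M : ℝ, ∀ t ∈ Set.Icc a b, ψ t ≤ M) ∧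
  (∀ r : ℝ, 0 < r → ∃ m : ℝ, 0 < m ∧ ∀ t : ℝ, r ≤ t → m ≤ ψ t)

/-- A function is pseudoconcave near `+∞` if it is equivalent there to a positive concave
function. -/
def PseudoconcaveAtTop (ψ : ℝ → ℝ) : Prop :=
  ∃ b : ℝ, 0 < b ∧ ∃ ψ₁ : ℝ → ℝ,
    ConcaveOn ℝ (Set.Ioi b) ψ₁ ∧ (∀ t ∈ Set.Ioi b, 0 < ψ₁ t) ∧
    ∃ C : ℝ, 0 < C ∧ ∀ t ∈ Set.Ioi b, ψ t ≤ C * ψ₁ t ∧ ψ₁ t ≤ C * ψ t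

/-- If `ψ ∈ 𝓑`, `ψ(t)/t` is bounded near infinity and `ψ` is pseudoconcave near `+∞`,
then `χ(t) := t/ψ(t)` is also pseudoconcave near `+∞`. -/
theorem dual_parameter_pseudoconcave (ψ : ℝ → ℝ) (hψ : BClass ψ)
    (hbd : ∃ M b : ℝ, 0 < b ∧ ∀ t : ℝ, b ≤ t → ψ t / t ≤ M)
    (hpc : PseudoconcaveAtTop ψ) :
    PseudoconcaveAtTop (fun t => t / ψ t) := by
  obtain ⟨b, hb, ψ₁, hconc, hpos, C, hC, heq⟩ := hpc
  have hψpos := hψ.2.1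
  -- ψ₁ is "quasi-monotone": for b < u ≤ t, ψ₁ u ≤ 2 ψ₁ t
  have hB : ∀ u t : ℝ, b < u → u ≤ t → ψ₁ u ≤ 2 * ψ₁ t := by
    intro u t hu hut
    have hy : 2*t - u ∈ Set.Ioi b := by simp only [Set.mem_Ioi]; linarith
    have hx : u ∈ Set.Ioi b := hu
    have h2 := hconc.2 hx hy (by norm_num : (0:ℝ) ≤ 1/2) (by norm_num : (0:ℝ) ≤ 1/2)
      (by norm_num)
    have hmid : (1/2 : ℝ) • u + (1/2 : ℝ) • (2*t - u) = t := by
      simp only [smul_eq_mul]; ring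
    rw [hmid] at h2
    have hposy := hpos _ hy
    simp only [smul_eq_mul] at h2
    linarith
  -- lower concavity bound: for 2b < u ≤ t, ψ₁ u ≥ (u/(2t)) ψ₁ t
  have hA : ∀ u t : ℝ, 2*b < u → u ≤ t → u * ψ₁ t ≤ 2 * t * ψ₁ u := by
    intro u t hu hut
    have hu0 : 0 < u := by linarith
    have ht0 : 0 < t := by linarith
    have hd : 0 < t - u/2 := by linarith
    have hx : u/2 ∈ Set.Ioi b := by simp only [Set.mem_Ioi]; linarith
    have hy : t ∈ Set.Ioi b := by simp only [Set.mem_Ioi]; linarith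
    have ha : 0 ≤ (t - u)/(t - u/2) := div_nonneg (by linarith) hd.le
    have hc : 0 ≤ (u/2)/(t - u/2) := div_nonneg (by linarith) hd.le
    have hac : (t - u)/(t - u/2) + (u/2)/(t - u/2) = 1 := by
      rw [← add_div, div_eq_one_iff_eq hd.ne']; ring
    have h2 := hconc.2 hx hy ha hc hac
    have hpt : ((t - u)/(t - u/2)) • (u/2) + ((u/2)/(t - u/2)) • t = u := by
      simp only [smul_eq_mul]
      rw [div_mul_eq_mul_div, div_mul_eq_mul_div, ← add_div,
        div_eq_iff hd.ne']
      ring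
    rw [hpt] at h2
    simp only [smul_eq_mul] at h2
    have hp1 := hpos _ hx
    have hpt' := hpos _ hy
    have h3 : u/(2*t) ≤ (u/2)/(t - u/2) := by
      rw [div_le_div_iff₀ (by linarith) hd]; nlinarith
    have h4 : u/(2*t) * ψ₁ t ≤ (u/2)/(t - u/2) * ψ₁ t :=
      mul_le_mul_of_nonneg_right h3 hpt'.le
    have h5 : u/(2*t) * ψ₁ t ≤ ψ₁ u := by nlinarith [mul_nonneg ha hp1.le]
    rw [div_mul_eq_mul_div, div_le_iff₀ (by linarith : (0:ℝ) < 2*t)] at h5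
    linarith
  haveI : Nonempty ↥(Set.Ioi (2*b)) := ⟨⟨2*b+1, by simp only [Set.mem_Ioi]; linarith⟩⟩
  set χ₁ : ℝ → ℝ := fun t => ⨅ u : ↥(Set.Ioi (2*b)), ((u : ℝ) + t) / ψ₁ u with hχ₁
  have hmemb : ∀ u : ↥(Set.Ioi (2*b)), (u : ℝ) ∈ Set.Ioi b := by
    intro u
    have := u.2
    simp only [Set.mem_Ioi] at this ⊢
    linarith
  have hbdd : ∀ t : ℝ, 0 ≤ t →
      BddBelow (Set.range fun u : ↥(Set.Ioi (2*b)) => ((u:ℝ) + t) / ψ₁ u) := by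
    intro t ht
    refine ⟨0, ?_⟩
    rintro x ⟨u, rfl⟩
    have hu : (2*b : ℝ) < u := u.2
    exact div_nonneg (by linarith) (hpos _ (hmemb u)).le
  -- lower bound: χ₁ t ≥ (t/ψ₁ t)/2 for t > 2b
  have hlow : ∀ t : ℝ, 2*b < t → t / ψ₁ t / 2 ≤ χ₁ t := by
    intro t ht
    apply le_ciInf
    rintro ⟨u, hu⟩
    simp only [Set.mem_Ioi] at hu
    have ht0 : 0 < t := by linarith
    have hu0 : 0 < u := by linarith
    have hpt := hpos t (by simp only [Set.mem_Ioi]; linarith)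
    have hpu := hpos u (by simp only [Set.mem_Ioi]; linarith)
    show t / ψ₁ t / 2 ≤ (u + t) / ψ₁ u
    rw [div_div, div_le_div_iff₀ (by positivity) hpu]
    rcases le_total u t with h | h
    · -- u ≤ t : use hB
      have := hB u t (by linarith) h
      nlinarith [mul_pos hu0 hpt]
    · -- t ≤ u : use hA
      have := hA t u ht h
      nlinarith [mul_pos ht0 hpt]
  -- upper bound: χ₁ t ≤ 2 * (t/ψ₁ t) for t > 2b
  have hupp : ∀ t : ℝ, 2*b < t → χ₁ t ≤ 2 * (t / ψ₁ t) := by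
    intro t ht
    have ht0 : 0 < t := by linarith
    have h1 : χ₁ t ≤ ((t : ℝ) + t) / ψ₁ t :=
      ciInf_le (hbdd t ht0.le) ⟨t, by simp only [Set.mem_Ioi]; exact ht⟩
    have : ((t : ℝ) + t) / ψ₁ t = 2 * (t / ψ₁ t) := by ring
    linarith [h1.trans_eq this]
  have hposχ : ∀ t ∈ Set.Ioi (2*b), 0 < χ₁ t := by
    intro t ht
    simp only [Set.mem_Ioi] at ht
    have hpt := hpos t (by simp only [Set.mem_Ioi]; linarith)
    have ht0 : (0:ℝ) < t := by linarith
    have : 0 < t / ψ₁ t / 2 := by positivity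
    linarith [hlow t ht]
  have hconcχ : ConcaveOn ℝ (Set.Ioi (2*b)) χ₁ := by
    refine ⟨convex_Ioi _, ?_⟩
    intro x hx y hy a c ha hc hac
    simp only [Set.mem_Ioi] at hx hy
    simp only [smul_eq_mul]
    apply le_ciInf
    intro u
    have hu : (2*b : ℝ) < u := u.2
    have hpu := hpos _ (hmemb u)
    have h1 : χ₁ x ≤ ((u:ℝ) + x) / ψ₁ u := ciInf_le (hbdd x (by linarith)) u
    have h2 : χ₁ y ≤ ((u:ℝ) + y) / ψ₁ u := ciInf_le (hbdd y (by linarith)) u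
    have hkey : a * (((u:ℝ) + x) / ψ₁ u) + c * (((u:ℝ) + y) / ψ₁ u)
        = ((u:ℝ) + (a * x + c * y)) / ψ₁ u := by
      field_simp
      nlinarith [hac]
    calc a * χ₁ x + c * χ₁ y
        ≤ a * (((u:ℝ) + x) / ψ₁ u) + c * (((u:ℝ) + y) / ψ₁ u) := by
          gcongr
      _ = ((u:ℝ) + (a * x + c * y)) / ψ₁ u := hkey
  refine ⟨2*b, by linarith, χ₁, hconcχ, hposχ, 2*C, by linarith, ?_⟩
  intro t ht
  simp only [Set.mem_Ioi] at ht
  have ht0 : 0 < t := by linarith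
  have htb : t ∈ Set.Ioi b := by simp only [Set.mem_Ioi]; linarith
  have hpt := hpos t htb
  have hψt := hψpos t ht0
  obtain ⟨he1, he2⟩ := heq t htb
  constructor
  · -- t/ψ t ≤ 2C * χ₁ t
    have h1 : t / ψ t ≤ C * (t / ψ₁ t) := by
      rw [div_le_iff₀ hψt] at *
      rw [mul_comm C _, mul_assoc]
      rw [div_mul_eq_mul_div, le_div_iff₀ hpt] at *
      nlinarith
    have h2 := hlow t ht
    nlinarith
  · -- χ₁ t ≤ 2C * (t/ψ t)
    have h1 : t / ψ₁ t ≤ C * (t / ψ t) := by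
      rw [div_le_iff₀ hpt]
      rw [mul_comm C _, mul_assoc, div_mul_eq_mul_div, le_div_iff₀ hψt]
      nlinarith
    have h2 := hupp t ht
    nlinarith
end

section
/- Let q ≥ 0 be an integer, n ≥ 1, and let μ(ξ) := ⟨ξ⟩^{q+n/2} φ(⟨ξ⟩) where φ ∈ 𝓜 is continuous and satisfies ∫₁^∞ dt/(t φ²(t)) < ∞. Then for every multi-index α with |α| ≤ q, the function ξ ↦ ξ^α / μ(ξ) belongs to L²(ℝⁿ); in particular ∫_{ℝⁿ} ⟨ξ⟩^{2q} ⟨ξ⟩^{-2q-n} φ(⟨ξ⟩)^{-2} dξ < ∞. -/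
open Filter MeasureTheory ENNReal

open Set Metric


lemma lintegral_fun_norm_addHaar' {E : Type*} [NormedAddCommGroup E] [NormedSpace ℝ E]
    [MeasurableSpace E] [BorelSpace E] [Nontrivial E] [FiniteDimensional ℝ E]
    (μ : Measure E) [μ.IsAddHaarMeasure] (f : ℝ → ℝ≥0∞) (hf : Measurable f) :
    ∫⁻ x, f ‖x‖ ∂μ
      = μ.toSphere Set.univ * ∫⁻ y in Set.Ioi (0:ℝ),
          ENNReal.ofReal (y ^ (Module.finrank ℝ E - 1)) * f y := by
  have h0 : MeasurableSet ({(0:E)}ᶜ) := (measurableSet_singleton _).compl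
  have hmeas : Measurable fun p : sphere (0:E) 1 × Set.Ioi (0:ℝ) => f p.2 :=
    hf.comp (measurable_subtype_coe.comp measurable_snd)
  calc ∫⁻ x, f ‖x‖ ∂μ = ∫⁻ x : ({(0:E)}ᶜ : Set E), f ‖(x:E)‖ ∂(μ.comap (↑)) := by
        rw [lintegral_subtype_comap h0 (fun x => f ‖x‖), MeasureTheory.restrict_compl_singleton]
    _ = ∫⁻ p : sphere (0:E) 1 × Set.Ioi (0:ℝ), f p.2
          ∂(μ.toSphere.prod (.volumeIoiPow (Module.finrank ℝ E - 1))) :=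
        by rw [← μ.measurePreserving_homeomorphUnitSphereProd.lintegral_comp hmeas]
           simp only [homeomorphUnitSphereProd_apply_snd_coe]
    _ = μ.toSphere Set.univ * ∫⁻ y : Set.Ioi (0:ℝ), f y
          ∂(Measure.volumeIoiPow (Module.finrank ℝ E - 1)) := by
        rw [MeasureTheory.lintegral_prod _ hmeas.aemeasurable]
        simp [lintegral_const, mul_comm]
    _ = _ := by
        congr 1
        have hg : Measurable (fun y : Set.Ioi (0:ℝ) => f y) := hf.comp measurable_subtype_coe
        rw [Measure.volumeIoiPow, lintegral_withDensity_eq_lintegral_mul _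
            (by exact (measurable_subtype_coe.pow_const _).ennreal_ofReal) hg,
          ← lintegral_subtype_comap measurableSet_Ioi
            (fun y => ENNReal.ofReal (y ^ (Module.finrank ℝ E - 1)) * f y)]
        rfl

lemma key_radial (n : ℕ) (hn : 1 ≤ n) (φ : ℝ → ℝ) (hφ : MClass φ)
    (hint : (∫⁻ t in Set.Ioi (1:ℝ), ENNReal.ofReal (1 / (t * (φ t) ^ 2))) < ⊤) :
    ∫⁻ r in Set.Ioi (0:ℝ), ENNReal.ofReal (r ^ (n-1)) *
      ENNReal.ofReal ((1+r^2) ^ (-(n:ℝ)/2) * ((φ (Real.sqrt (1+r^2)))^2)⁻¹) < ⊤ := by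
  have hφpos := hφ.2.1
  set F : ℝ → ℝ≥0∞ := fun r => ENNReal.ofReal (r ^ (n-1)) *
      ENNReal.ofReal ((1+r^2) ^ (-(n:ℝ)/2) * ((φ (Real.sqrt (1+r^2)))^2)⁻¹) with hF
  calc ∫⁻ r in Set.Ioi (0:ℝ), F r
      ≤ ∫⁻ r in Set.Ioc (0:ℝ) 1 ∪ Set.Ioi 1, F r :=
        lintegral_mono_set Ioi_subset_Ioc_union_Ioi
    _ ≤ (∫⁻ r in Set.Ioc (0:ℝ) 1, F r) + ∫⁻ r in Set.Ioi (1:ℝ), F r :=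
        lintegral_union_le _ _ _
    _ < ⊤ := ENNReal.add_lt_top.2 ⟨?_, ?_⟩
  · -- small radii
    obtain ⟨C, hC, hCb⟩ := hφ.2.2.1 2 one_lt_two
    have hbound : ∀ r ∈ Set.Ioc (0:ℝ) 1, F r ≤ ENNReal.ofReal (C^2) := by
      intro r hr
      have h1 : (1:ℝ) ≤ 1 + r^2 := by nlinarith [hr.1]
      have hs1 : (1:ℝ) ≤ Real.sqrt (1+r^2) := by
        nth_rewrite 1 [show (1:ℝ) = Real.sqrt 1 by simp]
        exact Real.sqrt_le_sqrt h1
      have hs2 : Real.sqrt (1+r^2) ≤ 2 := by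
        rw [show (2:ℝ) = Real.sqrt 4 by rw [show (4:ℝ) = 2^2 by norm_num, Real.sqrt_sq]; norm_num]
        refine Real.sqrt_le_sqrt (by nlinarith [hr.1, hr.2])
      obtain ⟨hCu, hCl⟩ := hCb _ ⟨hs1, hs2⟩
      have hφs : 0 < φ (Real.sqrt (1+r^2)) := hφpos _ hs1
      have hinv : ((φ (Real.sqrt (1+r^2)))^2)⁻¹ ≤ C^2 := by
        rw [inv_le_comm₀ (by positivity) (by positivity)]
        calc (C^2)⁻¹ = (C⁻¹)^2 := by rw [inv_pow]
          _ ≤ (φ (Real.sqrt (1+r^2)))^2 := by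
            apply pow_le_pow_left₀ (by positivity) hCl
      have hpow : r ^ (n-1) ≤ 1 := pow_le_one₀ hr.1.le hr.2
      have hrpow : (1+r^2) ^ (-(n:ℝ)/2) ≤ 1 := by
        refine Real.rpow_le_one_of_one_le_of_nonpos h1 ?_
        have : (0:ℝ) ≤ (n:ℝ) := Nat.cast_nonneg n
        linarith
      calc F r ≤ ENNReal.ofReal 1 * ENNReal.ofReal (1 * C^2) := by
            refine mul_le_mul' (ENNReal.ofReal_le_ofReal hpow) (ENNReal.ofReal_le_ofReal ?_)
            exact mul_le_mul hrpow hinv (by positivity) zero_le_one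
        _ = ENNReal.ofReal (C^2) := by rw [one_mul]; simp
    calc ∫⁻ r in Set.Ioc (0:ℝ) 1, F r ≤ ∫⁻ _ in Set.Ioc (0:ℝ) 1, ENNReal.ofReal (C^2) :=
          setLIntegral_mono' measurableSet_Ioc hbound
      _ = ENNReal.ofReal (C^2) * volume (Set.Ioc (0:ℝ) 1) := setLIntegral_const _ _
      _ < ⊤ := by
          apply ENNReal.mul_lt_top ENNReal.ofReal_lt_top
          simp [Real.volume_Ioc]
  · -- large radii
    set G : ℝ → ℝ≥0∞ := fun r => ENNReal.ofReal (r⁻¹ * ((φ (Real.sqrt (1+r^2)))^2)⁻¹) with hG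
    have hFG : ∀ r ∈ Set.Ioi (1:ℝ), F r ≤ G r := by
      intro r hr
      have hr0 : (0:ℝ) < r := lt_trans one_pos hr
      have key : r ^ (n-1) * (1+r^2) ^ (-(n:ℝ)/2) ≤ r⁻¹ := by
        have hnn : (0:ℝ) ≤ (n:ℝ) := Nat.cast_nonneg n
        have h1 : (1+r^2) ^ (-(n:ℝ)/2) ≤ (r^2) ^ (-(n:ℝ)/2) :=
          Real.rpow_le_rpow_of_nonpos (by positivity) (by nlinarith) (by linarith)
        have h2 : ((r^2:ℝ)) ^ (-(n:ℝ)/2) = r ^ (-(n:ℝ)) := by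
          rw [← Real.rpow_natCast r 2, ← Real.rpow_mul hr0.le]
          congr 1
          ring
        have h3 : r ^ (n-1) = r ^ ((n:ℝ)-1) := by
          rw [← Real.rpow_natCast r (n-1), Nat.cast_sub hn]
          norm_num
        calc r ^ (n-1) * (1+r^2) ^ (-(n:ℝ)/2) ≤ r ^ (n-1) * (r^2) ^ (-(n:ℝ)/2) :=
              mul_le_mul_of_nonneg_left h1 (by positivity)
          _ = r ^ ((n:ℝ)-1) * r ^ (-(n:ℝ)) := by rw [h2, h3]
          _ = r ^ ((n:ℝ)-1 + -(n:ℝ)) := (Real.rpow_add hr0 _ _).symm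
          _ = r ^ (-1:ℝ) := by congr 1; ring
          _ = r⁻¹ := Real.rpow_neg_one r
      simp only [hF, hG]
      rw [← ENNReal.ofReal_mul (by positivity)]
      apply ENNReal.ofReal_le_ofReal
      rw [← mul_assoc]
      exact mul_le_mul_of_nonneg_right key (by positivity)
    have hsqrt2 : (1:ℝ) < Real.sqrt 2 := by
      have := Real.sqrt_lt_sqrt (by norm_num : (0:ℝ) ≤ 1) (by norm_num : (1:ℝ) < 2)
      rwa [Real.sqrt_one] at this
    have htfacts : ∀ t ∈ Set.Ioi (Real.sqrt 2), (2:ℝ) < t^2 ∧ 1 < t := by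
      intro t ht
      have h := Real.mul_self_sqrt (by norm_num : (0:ℝ) ≤ 2)
      have ht' : Real.sqrt 2 < t := ht
      constructor
      · nlinarith [Real.sqrt_nonneg 2]
      · linarith
    have hderiv : ∀ t ∈ Set.Ioi (Real.sqrt 2),
        HasFDerivWithinAt (fun t => Real.sqrt (t^2-1))
          ((1:ℝ →L[ℝ] ℝ).smulRight (t / Real.sqrt (t^2-1))) (Set.Ioi (Real.sqrt 2)) t := by
      intro t ht
      obtain ⟨h2, h1t⟩ := htfacts t ht
      have ht2 : (0:ℝ) < t^2 - 1 := by linarith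
      have hD1 : HasDerivAt (fun t:ℝ => t^2-1) (2*t) t := by
        simpa using (hasDerivAt_pow 2 t).sub_const 1
      have hD2 := (Real.hasDerivAt_sqrt ht2.ne').comp t hD1
      have heq : 1/(2*Real.sqrt (t^2-1)) * (2*t) = t / Real.sqrt (t^2-1) := by
        have : Real.sqrt (t^2-1) ≠ 0 := by positivity
        field_simp
      rw [heq] at hD2
      exact hD2.hasDerivWithinAt.hasFDerivWithinAt
    have hinj : Set.InjOn (fun t => Real.sqrt (t^2-1)) (Set.Ioi (Real.sqrt 2)) := by
      intro a ha b hb hab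
      obtain ⟨ha2, ha1⟩ := htfacts a ha
      obtain ⟨hb2, hb1⟩ := htfacts b hb
      have h : a^2 - 1 = b^2 - 1 :=
        (Real.sqrt_inj (by linarith) (by linarith)).mp hab
      have h' : (a-b)*(a+b) = 0 := by nlinarith
      rcases mul_eq_zero.mp h' with h'' | h''
      · linarith
      · linarith
    have himg : (fun t => Real.sqrt (t^2-1)) '' Set.Ioi (Real.sqrt 2) = Set.Ioi 1 := by
      ext y
      simp only [Set.mem_image, Set.mem_Ioi]
      constructor
      · rintro ⟨t, ht, rfl⟩
        obtain ⟨h2, h1t⟩ := htfacts t ht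
        nth_rewrite 1 [show (1:ℝ) = Real.sqrt 1 by simp]
        exact Real.sqrt_lt_sqrt (by norm_num) (by linarith)
      · intro hy
        refine ⟨Real.sqrt (y^2+1), ?_, ?_⟩
        · exact Real.sqrt_lt_sqrt (by norm_num) (by nlinarith)
        · rw [Real.sq_sqrt (by positivity), add_sub_cancel_right, Real.sqrt_sq (by linarith)]
    have hchange := MeasureTheory.lintegral_image_eq_lintegral_abs_det_fderiv_mul volume
      measurableSet_Ioi hderiv hinj G
    rw [himg] at hchange
    have hpt : ∀ t ∈ Set.Ioi (Real.sqrt 2),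
        ENNReal.ofReal |((1:ℝ →L[ℝ] ℝ).smulRight (t / Real.sqrt (t^2-1))).det| *
          G (Real.sqrt (t^2-1)) ≤ 2 * ENNReal.ofReal (1 / (t * (φ t)^2)) := by
      intro t ht
      obtain ⟨h2, h1t⟩ := htfacts t ht
      have ht2 : (0:ℝ) < t^2 - 1 := by linarith
      have hspos : (0:ℝ) < Real.sqrt (t^2-1) := Real.sqrt_pos.mpr ht2
      have hs : Real.sqrt (1 + Real.sqrt (t^2-1)^2) = t := by
        rw [Real.sq_sqrt ht2.le, show (1:ℝ) + (t^2-1) = t^2 by ring,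
          Real.sqrt_sq (by linarith)]
      rw [ContinuousLinearMap.smulRight_one_eq_toSpanSingleton, ContinuousLinearMap.det_toSpanSingleton, hG]
      simp only [hs]
      rw [abs_of_pos (by positivity), ← ENNReal.ofReal_mul (by positivity)]
      have hmul : t / Real.sqrt (t^2-1) * ((Real.sqrt (t^2-1))⁻¹ * ((φ t)^2)⁻¹)
          = t / (t^2-1) * ((φ t)^2)⁻¹ := by
        rw [div_eq_mul_inv, div_eq_mul_inv, mul_assoc, ← mul_assoc (Real.sqrt (t^2-1))⁻¹,
          ← mul_inv, Real.mul_self_sqrt ht2.le]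
        ring
      have hle : t / (t^2-1) * ((φ t)^2)⁻¹ ≤ 2 * (1 / (t * (φ t)^2)) := by
        have hX : (0:ℝ) ≤ ((φ t)^2)⁻¹ := by positivity
        have h1 : t / (t^2-1) ≤ 2 / t := by
          rw [div_le_div_iff₀ ht2 (by linarith)]
          nlinarith
        have h2' : (2:ℝ) / t * ((φ t)^2)⁻¹ = 2 * (1 / (t * (φ t)^2)) := by
          rw [div_eq_mul_inv, one_div, mul_inv]
          ring
        calc t / (t^2-1) * ((φ t)^2)⁻¹ ≤ 2 / t * ((φ t)^2)⁻¹ :=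
              mul_le_mul_of_nonneg_right h1 hX
          _ = 2 * (1 / (t * (φ t)^2)) := h2'
      calc ENNReal.ofReal (t / Real.sqrt (t^2-1) * ((Real.sqrt (t^2-1))⁻¹ * ((φ t)^2)⁻¹)) ≤
            ENNReal.ofReal (2 * (1 / (t * (φ t)^2))) := by
            rw [hmul]; exact ENNReal.ofReal_le_ofReal hle
        _ = 2 * ENNReal.ofReal (1 / (t * (φ t)^2)) := by
            rw [ENNReal.ofReal_mul (by norm_num), ENNReal.ofReal_ofNat]
    calc ∫⁻ r in Set.Ioi (1:ℝ), F r ≤ ∫⁻ r in Set.Ioi (1:ℝ), G r :=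
          setLIntegral_mono' measurableSet_Ioi hFG
      _ = ∫⁻ t in Set.Ioi (Real.sqrt 2),
            ENNReal.ofReal |((1:ℝ →L[ℝ] ℝ).smulRight (t / Real.sqrt (t^2-1))).det| *
              G (Real.sqrt (t^2-1)) := hchange
      _ ≤ ∫⁻ t in Set.Ioi (Real.sqrt 2), 2 * ENNReal.ofReal (1 / (t * (φ t)^2)) :=
          setLIntegral_mono' measurableSet_Ioi hpt
      _ = 2 * ∫⁻ t in Set.Ioi (Real.sqrt 2), ENNReal.ofReal (1 / (t * (φ t)^2)) :=
          lintegral_const_mul' _ _ (by norm_num)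
      _ ≤ 2 * ∫⁻ t in Set.Ioi (1:ℝ), ENNReal.ofReal (1 / (t * (φ t)^2)) := by
          gcongr
      _ < ⊤ := ENNReal.mul_lt_top (by norm_num) hint


theorem coord_le_norm (n : ℕ) (ξ : EuclideanSpace ℝ (Fin n)) (i : Fin n) : |ξ i| ≤ ‖ξ‖ := by
  rw [EuclideanSpace.norm_eq ξ, show |ξ i| = Real.sqrt (‖ξ i‖^2) by
    rw [Real.norm_eq_abs, Real.sqrt_sq_eq_abs, abs_abs]]
  apply Real.sqrt_le_sqrt
  exact Finset.single_le_sum (f := fun j => ‖ξ j‖ ^ 2) (fun j _ => sq_nonneg _) (Finset.mem_univ i)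

/-- The key integrability computation behind the embedding
`H^{q+n/2,φ}(ℝⁿ) ↪ C^q_b(ℝⁿ)`: with `μ(ξ) = ⟨ξ⟩^{q+n/2}φ(⟨ξ⟩)` and
`∫₁^∞ dt/(tφ²(t)) < ∞`, the function `ξ ↦ ξ^α/μ(ξ)` is in `L²(ℝⁿ)` for every multi-index
`|α| ≤ q`; in particular `∫ ⟨ξ⟩^{2q}⟨ξ⟩^{-2q-n}φ(⟨ξ⟩)^{-2} dξ < ∞`. -/
theorem key_integrability (n : ℕ) (hn : 1 ≤ n) (q : ℕ)
    (φ : ℝ → ℝ) (hφ : MClass φ) (hcont : ContinuousOn φ (Set.Ici (1:ℝ)))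
    (hint : (∫⁻ t in Set.Ioi (1:ℝ), ENNReal.ofReal (1 / (t * (φ t) ^ 2))) < ⊤) :
    (∀ α : Fin n → ℕ, (∑ i, α i) ≤ q →
      MemLp
        (fun ξ : EuclideanSpace ℝ (Fin n) =>
          (∏ i, ξ i ^ α i) /
            (Real.sqrt (1 + ‖ξ‖ ^ 2) ^ ((q : ℝ) + n / 2) *
              φ (Real.sqrt (1 + ‖ξ‖ ^ 2))))
        2 volume) ∧
    (∫⁻ ξ : EuclideanSpace ℝ (Fin n),
      ENNReal.ofReal ((1 + ‖ξ‖ ^ 2) ^ (q : ℝ) * (1 + ‖ξ‖ ^ 2) ^ (-(q : ℝ) - n / 2) *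
        ((φ (Real.sqrt (1 + ‖ξ‖ ^ 2))) ^ 2)⁻¹)) < ⊤ := by
  have hφm := hφ.1
  have hφpos := hφ.2.1
  haveI : Nontrivial (EuclideanSpace ℝ (Fin n)) :=
    Module.nontrivial_of_finrank_pos (R := ℝ) (by rw [finrank_euclideanSpace_fin]; omega)
  have hsm : Measurable (fun r : ℝ => Real.sqrt (1 + r^2)) := by fun_prop
  have hfm : Measurable (fun r : ℝ =>
      ENNReal.ofReal ((1+r^2) ^ (-(n:ℝ)/2) * ((φ (Real.sqrt (1+r^2)))^2)⁻¹)) := by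
    apply Measurable.ennreal_ofReal
    apply Measurable.mul
    · fun_prop
    · exact ((hφm.comp hsm).pow_const 2).inv
  have hkey : (∫⁻ ξ : EuclideanSpace ℝ (Fin n),
      ENNReal.ofReal ((1 + ‖ξ‖ ^ 2) ^ (-(n:ℝ)/2) * ((φ (Real.sqrt (1 + ‖ξ‖ ^ 2)))^2)⁻¹)) < ⊤ := by
    rw [lintegral_fun_norm_addHaar' (volume : Measure (EuclideanSpace ℝ (Fin n)))
      (fun r => ENNReal.ofReal ((1+r^2) ^ (-(n:ℝ)/2) * ((φ (Real.sqrt (1+r^2)))^2)⁻¹)) hfm]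
    refine ENNReal.mul_lt_top (measure_lt_top _ _) ?_
    simpa [finrank_euclideanSpace_fin] using key_radial n hn φ hφ hint
  constructor
  · -- the Memℒp statements
    intro α hα
    set s : EuclideanSpace ℝ (Fin n) → ℝ := fun ξ => Real.sqrt (1 + ‖ξ‖^2) with hsdef
    have hs1 : ∀ ξ, 1 ≤ s ξ := by
      intro ξ
      rw [hsdef]
      nth_rewrite 1 [show (1:ℝ) = Real.sqrt 1 by simp]
      exact Real.sqrt_le_sqrt (by nlinarith [sq_nonneg ‖ξ‖])
    have hsmeas : Measurable s := by
      apply hsm.comp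
      exact (continuous_norm.measurable)
    have hmeas : Measurable (fun ξ : EuclideanSpace ℝ (Fin n) =>
        (∏ i, ξ i ^ α i) / (s ξ ^ ((q : ℝ) + n / 2) * φ (s ξ))) := by
      apply Measurable.div
      · apply Finset.measurable_prod
        intro i _
        exact ((EuclideanSpace.proj (𝕜 := ℝ) i).continuous.measurable :
          Measurable fun ξ : EuclideanSpace ℝ (Fin n) => ξ i).pow_const _
      · fun_prop
    -- pointwise bound on the square
    have hptreal : ∀ ξ : EuclideanSpace ℝ (Fin n),
        ((∏ i, ξ i ^ α i) / (s ξ ^ ((q : ℝ) + n / 2) * φ (s ξ)))^2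
          ≤ (1 + ‖ξ‖ ^ 2) ^ (-(n:ℝ)/2) * ((φ (s ξ))^2)⁻¹ := by
      intro ξ
      have hsξ := hs1 ξ
      have hs0 : (0:ℝ) < s ξ := lt_of_lt_of_le one_pos hsξ
      have hφs : (0:ℝ) < φ (s ξ) := hφpos _ hsξ
      have hnormle : ‖ξ‖ ≤ s ξ := by
        rw [hsdef]
        nth_rewrite 1 [show ‖ξ‖ = Real.sqrt (‖ξ‖^2) by rw [Real.sqrt_sq (norm_nonneg ξ)]]
        exact Real.sqrt_le_sqrt (by linarith)
      have hP : |∏ i, ξ i ^ α i| ≤ s ξ ^ q := by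
        calc |∏ i, ξ i ^ α i| = ∏ i, |ξ i| ^ α i := by
              rw [Finset.abs_prod]; simp_rw [abs_pow]
          _ ≤ ∏ i, s ξ ^ α i := Finset.prod_le_prod (fun i _ => by positivity)
              (fun i _ => pow_le_pow_left₀ (abs_nonneg _)
                ((coord_le_norm n ξ i).trans hnormle) _)
          _ = s ξ ^ (∑ i, α i) := Finset.prod_pow_eq_pow_sum _ _ _
          _ ≤ s ξ ^ q := pow_le_pow_right₀ hsξ hα
      have hP2 : (∏ i, ξ i ^ α i)^2 ≤ s ξ ^ (2*q:ℝ) := by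
        have h1 : (∏ i, ξ i ^ α i)^2 = |∏ i, ξ i ^ α i|^2 := (sq_abs _).symm
        have h2 : (s ξ ^ q : ℝ)^2 = s ξ ^ (2*q:ℝ) := by
          rw [← pow_mul, ← Real.rpow_natCast (s ξ) (q*2)]
          congr 1
          push_cast; ring
        rw [h1, ← h2]
        exact pow_le_pow_left₀ (abs_nonneg _) hP 2
      have hD2 : (s ξ ^ ((q : ℝ) + n / 2) * φ (s ξ))^2
          = s ξ ^ (2*q + n:ℝ) * (φ (s ξ))^2 := by
        rw [mul_pow]
        congr 1
        rw [← Real.rpow_natCast (s ξ ^ ((q : ℝ) + n / 2)) 2, ← Real.rpow_mul hs0.le]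
        congr 1
        push_cast; ring
      have hfrac : s ξ ^ (2*q:ℝ) / (s ξ ^ (2*q + n:ℝ) * (φ (s ξ))^2)
          = (1 + ‖ξ‖ ^ 2) ^ (-(n:ℝ)/2) * ((φ (s ξ))^2)⁻¹ := by
        have hsn : s ξ ^ ((n:ℝ)) = (1 + ‖ξ‖^2) ^ ((n:ℝ)/2) := by
          simp only [hsdef]
          rw [Real.sqrt_eq_rpow, ← Real.rpow_mul (by positivity)]
          congr 1
          ring
        have hsplit : s ξ ^ (2*q + n:ℝ) = s ξ ^ (2*q:ℝ) * s ξ ^ ((n:ℝ)) :=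
          Real.rpow_add hs0 _ _
        rw [hsplit, hsn]
        have hA : (0:ℝ) < s ξ ^ (2*q:ℝ) := Real.rpow_pos_of_pos hs0 _
        have hB : (0:ℝ) < (1 + ‖ξ‖^2) ^ ((n:ℝ)/2) := Real.rpow_pos_of_pos (by positivity) _
        rw [show (-(n:ℝ)/2) = -((n:ℝ)/2) by ring, Real.rpow_neg (by positivity)]
        field_simp
      calc ((∏ i, ξ i ^ α i) / (s ξ ^ ((q : ℝ) + n / 2) * φ (s ξ)))^2
          = (∏ i, ξ i ^ α i)^2 / (s ξ ^ ((q : ℝ) + n / 2) * φ (s ξ))^2 := div_pow _ _ 2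
        _ ≤ s ξ ^ (2*q:ℝ) / (s ξ ^ ((q : ℝ) + n / 2) * φ (s ξ))^2 := by
            have hpos : (0:ℝ) < (s ξ ^ ((q : ℝ) + n / 2) * φ (s ξ))^2 := by positivity
            gcongr
        _ = (1 + ‖ξ‖ ^ 2) ^ (-(n:ℝ)/2) * ((φ (s ξ))^2)⁻¹ := by rw [hD2, hfrac]
    refine ⟨hmeas.aestronglyMeasurable, ?_⟩
    rw [eLpNorm_eq_lintegral_rpow_enorm_toReal (by norm_num) (by norm_num)]
    refine ENNReal.rpow_lt_top_of_nonneg (by norm_num) ?_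
    simp only [ENNReal.toReal_ofNat]
    refine ne_of_lt (lt_of_le_of_lt (lintegral_mono (fun ξ => ?_)) hkey)
    set v : ℝ := (∏ i, ξ i ^ α i) / (s ξ ^ ((q : ℝ) + n / 2) * φ (s ξ)) with hv
    have h1 : ((‖v‖₊ : ℝ≥0∞)) ^ (2:ℝ) = ENNReal.ofReal (v^2) := by
      rw [← enorm_eq_nnnorm, ← ofReal_norm_eq_enorm, ENNReal.ofReal_rpow_of_nonneg (norm_nonneg _) (by norm_num)]
      congr 1
      rw [show (2:ℝ) = ((2:ℕ):ℝ) by norm_num, Real.rpow_natCast, Real.norm_eq_abs, sq_abs]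
    rw [enorm_eq_nnnorm, h1]
    exact ENNReal.ofReal_le_ofReal (hptreal ξ)
  · -- the second integral
    have heq : ∀ ξ : EuclideanSpace ℝ (Fin n),
        ENNReal.ofReal ((1 + ‖ξ‖ ^ 2) ^ (q : ℝ) * (1 + ‖ξ‖ ^ 2) ^ (-(q : ℝ) - n / 2) *
          ((φ (Real.sqrt (1 + ‖ξ‖ ^ 2))) ^ 2)⁻¹)
          = ENNReal.ofReal ((1 + ‖ξ‖ ^ 2) ^ (-(n:ℝ)/2) *
              ((φ (Real.sqrt (1 + ‖ξ‖ ^ 2)))^2)⁻¹) := by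
      intro ξ
      congr 2
      rw [← Real.rpow_add (by positivity)]
      congr 1
      ring
    rw [lintegral_congr heq]
    exact hkey
end
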